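/- arXiv:2205.00343 — 11 statements merged into one kernel-verified Lean document; each statement's English description precedes it below -/
import Mathlib

section
/- Let X and Y be Polish spaces, P, Q ∈ P(X), and f : X → Y a Borel map. Then the pushforward under f × f of the set of couplings of P and Q equals the set of couplings of the pushforwards: (f × f)_# Π(P,Q) = Π(f_#P, f_#Q). -/
open MeasureTheory
open scoped ENNReal

noncomputable section

/-- The set of couplings of two measures: probability measures on the product
whose first marginal is `P` and second marginal is `Q`. -/
def couplings {X : Type*} [MeasurableSpace X] (P Q : Measure X) :
    Set (Measure (X × X)) :=
  {γ | IsProbabilityMeasure γ ∧ γ.map Prod.fst = P ∧ γ.map Prod.snd = Q}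

section Aux

open ProbabilityTheory

variable {X Y : Type*}
    [MeasurableSpace X] [TopologicalSpace X] [PolishSpace X] [BorelSpace X]
    [MeasurableSpace Y] [TopologicalSpace Y] [PolishSpace Y] [BorelSpace Y]

lemma couplings_nonempty_aux (P : Measure X) [IsProbabilityMeasure P] : Nonempty X := by
  by_contra h
  rw [not_nonempty_iff] at h
  have h1 : P Set.univ = 1 := measure_univ
  rw [Set.univ_eq_empty_iff.mpr h, measure_empty] at h1
  exact zero_ne_one h1

/-- The disintegration kernel of `P` over `P.map f`: its values at `y` are concentrated
on `f ⁻¹' {y}` and it averages back to `P`. -/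
lemma disint_aux [Nonempty X] (P : Measure X) [IsProbabilityMeasure P]
    (f : X → Y) (hf : Measurable f) :
    haveI : IsProbabilityMeasure (P.map (fun x => (f x, x))) :=
      Measure.isProbabilityMeasure_map ((hf.prodMk measurable_id).aemeasurable)
    ((P.map f).bind (P.map (fun x => (f x, x))).condKernel = P) ∧
    (∀ᵐ y ∂(P.map f),
      (((P.map (fun x => (f x, x))).condKernel y).map f = Measure.dirac y)) := by
  have hgr : Measurable fun x : X => (f x, x) := hf.prodMk measurable_id
  have hdiag : Measurable fun y : Y => (y, y) := measurable_id.prodMk measurable_id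
  haveI : Nonempty Y := ⟨f (Classical.choice ‹Nonempty X›)⟩
  haveI : IsProbabilityMeasure (P.map (fun x => (f x, x))) :=
    Measure.isProbabilityMeasure_map ((hf.prodMk measurable_id).aemeasurable)
  set ρ : Measure (Y × X) := P.map (fun x => (f x, x)) with hρ
  set κ : ProbabilityTheory.Kernel Y X := ρ.condKernel with hκ
  have hfst : ρ.fst = P.map f := Measure.fst_map_prodMk measurable_id
  have hdis : ρ.fst ⊗ₘ κ = ρ := ρ.disintegrate κ
  constructor
  · -- bind κ recovers P
    ext s hs
    rw [Measure.bind_apply hs (κ.measurable.aemeasurable)]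
    have hsnd : ρ.snd = P := by
      rw [hρ, Measure.snd_map_prodMk hf, Measure.map_id']
    calc ∫⁻ y, κ y s ∂(P.map f)
        = ∫⁻ y, κ y (Prod.mk y ⁻¹' (Prod.snd ⁻¹' s)) ∂(P.map f) := rfl
      _ = (ρ.fst ⊗ₘ κ) (Prod.snd ⁻¹' s) := by
          rw [hfst, Measure.compProd_apply (measurable_snd hs)]
      _ = ρ (Prod.snd ⁻¹' s) := by rw [hdis]
      _ = ρ.snd s := (Measure.snd_apply hs).symm
      _ = P s := by rw [hsnd]
  · -- the kernel is a.e. concentrated on fibers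
    set ρ' : Measure (Y × Y) := (P.map f).map (fun y => (y, y)) with hρ'
    haveI : IsProbabilityMeasure (P.map f) := Measure.isProbabilityMeasure_map hf.aemeasurable
    haveI : IsProbabilityMeasure ρ' := Measure.isProbabilityMeasure_map hdiag.aemeasurable
    have hρ'fst : ρ'.fst = P.map f := by
      rw [hρ', Measure.fst_map_prodMk (X := fun y : Y => y) (Y := fun y : Y => y)
        measurable_id, Measure.map_id']
    -- ρ' disintegrates with the deterministic identity kernel
    have h2 : ρ' = ρ'.fst ⊗ₘ Kernel.deterministic id measurable_id := by
      ext s hs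
      rw [Measure.compProd_apply hs, hρ'fst, hρ', Measure.map_apply hdiag hs]
      rw [← lintegral_indicator_one (hdiag hs)]
      refine lintegral_congr fun y => ?_
      rw [Kernel.deterministic_apply, Measure.dirac_apply' _ (measurable_prodMk_left hs)]
      rfl
    -- ρ' also disintegrates with the mapped kernel
    have h3 : ρ' = ρ'.fst ⊗ₘ (κ.map f) := by
      have hmap : ρ.map (Prod.map id f) = ρ' := by
        rw [hρ, hρ', Measure.map_map (measurable_id.prodMap hf) hgr,
          Measure.map_map hdiag hf]
        rfl
      ext s hs
      rw [Measure.compProd_apply hs, hρ'fst, ← hmap,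
        Measure.map_apply (measurable_id.prodMap hf) hs, ← hdis, hfst,
        Measure.compProd_apply ((measurable_id.prodMap hf) hs)]
      refine (lintegral_congr fun y => ?_).symm
      rw [Kernel.map_apply _ hf, Measure.map_apply hf (measurable_prodMk_left hs)]
      rfl
    haveI : IsMarkovKernel (κ.map f) := Kernel.IsMarkovKernel.map κ hf
    have e1 := eq_condKernel_of_measure_eq_compProd (ρ := ρ') (κ.map f) h3
    have e2 := eq_condKernel_of_measure_eq_compProd (ρ := ρ')
      (Kernel.deterministic id measurable_id) h2
    rw [hρ'fst] at e1 e2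
    filter_upwards [e1, e2] with y h1' h2'
    have : (κ.map f) y = Kernel.deterministic id measurable_id y := by rw [h1', h2']
    rwa [Kernel.map_apply _ hf, Kernel.deterministic_apply] at this

end Aux

open ProbabilityTheory in
/-- Pushforward of the set of couplings via `f × f` equals the set of couplings of
the pushforwards. -/
theorem pushforward_couplings
    {X Y : Type*}
    [MeasurableSpace X] [TopologicalSpace X] [PolishSpace X] [BorelSpace X]
    [MeasurableSpace Y] [TopologicalSpace Y] [PolishSpace Y] [BorelSpace Y]
    (P Q : Measure X) [IsProbabilityMeasure P] [IsProbabilityMeasure Q]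
    (f : X → Y) (hf : Measurable f) :
    (fun γ => γ.map (Prod.map f f)) '' couplings P Q
      = couplings (P.map f) (Q.map f) := by
  haveI : Nonempty X := couplings_nonempty_aux P
  ext γ
  simp only [Set.mem_image, couplings, Set.mem_setOf_eq]
  constructor
  · rintro ⟨γ', ⟨hprob, h1, h2⟩, rfl⟩
    haveI := hprob
    refine ⟨Measure.isProbabilityMeasure_map ((hf.prodMap hf).aemeasurable), ?_, ?_⟩
    · rw [Measure.map_map measurable_fst (hf.prodMap hf)]
      have : (Prod.fst ∘ Prod.map f f : X × X → Y) = f ∘ Prod.fst := rfl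
      rw [this, ← Measure.map_map hf measurable_fst, h1]
    · rw [Measure.map_map measurable_snd (hf.prodMap hf)]
      have : (Prod.snd ∘ Prod.map f f : X × X → Y) = f ∘ Prod.snd := rfl
      rw [this, ← Measure.map_map hf measurable_snd, h2]
  · rintro ⟨hγprob, hγ1, hγ2⟩
    haveI := hγprob
    haveI : IsProbabilityMeasure (P.map (fun x => (f x, x))) :=
      Measure.isProbabilityMeasure_map ((hf.prodMk measurable_id).aemeasurable)
    haveI : IsProbabilityMeasure (Q.map (fun x => (f x, x))) :=
      Measure.isProbabilityMeasure_map ((hf.prodMk measurable_id).aemeasurable)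
    set κP : Kernel Y X := (P.map (fun x => (f x, x))).condKernel with hκP
    set κQ : Kernel Y X := (Q.map (fun x => (f x, x))).condKernel with hκQ
    obtain ⟨hPbind, hPdirac⟩ := disint_aux P f hf
    obtain ⟨hQbind, hQdirac⟩ := disint_aux Q f hf
    rw [← hκP] at hPbind hPdirac
    rw [← hκQ] at hQbind hQdirac
    set ξ : Kernel (Y × Y) (X × X) :=
      (κP.comap Prod.fst measurable_fst) ×ₖ (κQ.comap Prod.snd measurable_snd) with hξ
    have hξ_apply : ∀ p : Y × Y, ξ p = (κP p.1).prod (κQ p.2) := by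
      intro p
      rw [hξ, Kernel.prod_apply, Kernel.comap_apply, Kernel.comap_apply]
    set η : Measure (X × X) := γ.bind ξ with hη
    have hη_apply : ∀ {s : Set (X × X)}, MeasurableSet s →
        η s = ∫⁻ p, (κP p.1).prod (κQ p.2) s ∂γ := by
      intro s hs
      rw [hη, Measure.bind_apply hs (ξ.measurable.aemeasurable)]
      exact lintegral_congr fun p => by rw [hξ_apply]
    haveI : IsProbabilityMeasure η := by
      constructor
      rw [hη_apply MeasurableSet.univ]
      simp
    refine ⟨η, ⟨this, ?_, ?_⟩, ?_⟩
    · -- first marginal is P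
      ext s hs
      rw [Measure.map_apply measurable_fst hs, hη_apply (measurable_fst hs)]
      have : ∀ p : Y × Y, (κP p.1).prod (κQ p.2) (Prod.fst ⁻¹' s) = κP p.1 s := by
        intro p
        have : (Prod.fst ⁻¹' s : Set (X × X)) = s ×ˢ Set.univ := by
          ext z; simp
        rw [this, Measure.prod_prod, measure_univ, mul_one]
      simp_rw [this]
      rw [← lintegral_map (κP.measurable_coe hs) measurable_fst, hγ1]
      conv_rhs => rw [← hPbind]
      rw [Measure.bind_apply hs (κP.measurable.aemeasurable)]
    · -- second marginal is Q
      ext s hs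
      rw [Measure.map_apply measurable_snd hs, hη_apply (measurable_snd hs)]
      have : ∀ p : Y × Y, (κP p.1).prod (κQ p.2) (Prod.snd ⁻¹' s) = κQ p.2 s := by
        intro p
        have : (Prod.snd ⁻¹' s : Set (X × X)) = Set.univ ×ˢ s := by
          ext z; simp
        rw [this, Measure.prod_prod, measure_univ, one_mul]
      simp_rw [this]
      rw [← lintegral_map (κQ.measurable_coe hs) measurable_snd, hγ2]
      conv_rhs => rw [← hQbind]
      rw [Measure.bind_apply hs (κQ.measurable.aemeasurable)]
    · -- pushforward of η under f × f is γ
      ext s hs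
      rw [Measure.map_apply (hf.prodMap hf) hs, hη_apply ((hf.prodMap hf) hs)]
      have haP : ∀ᵐ p ∂γ, ((κP p.1).map f = Measure.dirac p.1) :=
        ae_of_ae_map (μ := γ) (f := (Prod.fst : Y × Y → Y))
          measurable_fst.aemeasurable
          (p := fun y => (κP y).map f = Measure.dirac y) (by rwa [hγ1])
      have haQ : ∀ᵐ p ∂γ, ((κQ p.2).map f = Measure.dirac p.2) :=
        ae_of_ae_map (μ := γ) (f := (Prod.snd : Y × Y → Y))
          measurable_snd.aemeasurable
          (p := fun y => (κQ y).map f = Measure.dirac y) (by rwa [hγ2])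
      have : ∫⁻ p, (κP p.1).prod (κQ p.2) (Prod.map f f ⁻¹' s) ∂γ
          = ∫⁻ p, s.indicator 1 p ∂γ := by
        refine lintegral_congr_ae ?_
        filter_upwards [haP, haQ] with p hp hq
        rw [← Measure.map_apply (hf.prodMap hf) hs, ← Measure.map_prod_map _ _ hf hf,
          hp, hq, Measure.dirac_prod_dirac, Measure.dirac_apply' _ hs]
      rw [this, lintegral_indicator_one hs]

end
end

section
/- Let X and Y be Polish spaces, P, Q ∈ P(X), f : X → Y a Borel map, and d : Y × Y → [0,∞] a Borel transportation cost on Y. Then the optimal transport discrepancy between P and Q with cost d ∘ (f × f) equals the optimal transport discrepancy between the pushforwards with cost d: W_{d∘(f×f)}(P,Q) = W_d(f_#P, f_#Q). -/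
open MeasureTheory ProbabilityTheory
open scoped ENNReal

noncomputable section

/-- Optimal transport discrepancy with transportation cost `c`. -/
def OTCost {X : Type*} [MeasurableSpace X] (c : X × X → ℝ≥0∞) (P Q : Measure X) : ℝ≥0∞ :=
  ⨅ γ ∈ couplings P Q, ∫⁻ x, c x ∂γ


/-- Support property of the disintegration kernel. -/
lemma condKernel_support_aux
    {X Y : Type*}
    [MeasurableSpace X] [TopologicalSpace X] [PolishSpace X] [BorelSpace X]
    [MeasurableSpace Y] [TopologicalSpace Y] [PolishSpace Y] [BorelSpace Y]
    (P : Measure X) [IsProbabilityMeasure P]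
    (f : X → Y) (hf : Measurable f) [Nonempty X] :
    ∀ᵐ y ∂(P.map f), (P.map (fun x => (f x, x))).condKernel y {x | f x = y} = 1 := by
  set ρ : Measure (Y × X) := P.map (fun x => (f x, x)) with hρ
  have hmap : Measurable (fun x => (f x, x)) := hf.prodMk measurable_id
  haveI : IsProbabilityMeasure ρ := Measure.isProbabilityMeasure_map hmap.aemeasurable
  have hfst : ρ.fst = P.map f := by
    rw [Measure.fst, hρ, Measure.map_map measurable_fst hmap]
    rfl
  set S : Set (Y × X) := {p | f p.2 = p.1} with hS
  have hSm : MeasurableSet S := by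
    have : S = (fun p : Y × X => (p.1, f p.2)) ⁻¹' (Set.diagonal Y) := by
      ext p; simp [hS, Set.diagonal, eq_comm]
    rw [this]
    exact (measurable_fst.prodMk (hf.comp measurable_snd))
      isClosed_diagonal.measurableSet
  have hρS : ρ S = 1 := by
    rw [hρ, Measure.map_apply hmap hSm]
    have : (fun x => (f x, x)) ⁻¹' S = Set.univ := by
      ext x; simp [hS]
    rw [this]; simp
  set g : Y → ℝ≥0∞ := fun y => ρ.condKernel y (Prod.mk y ⁻¹' S) with hg
  have hgm : Measurable g := Kernel.measurable_kernel_prodMk_left hSm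
  have hint : ∫⁻ y, g y ∂ρ.fst = 1 := by
    conv_rhs => rw [← hρS, ← ρ.disintegrate ρ.condKernel]
    rw [Measure.compProd_apply hSm]
  have hle : ∀ y, g y ≤ 1 := fun y => prob_le_one
  have hae : ∀ᵐ y ∂ρ.fst, g y = 1 := by
    have hsub : ∫⁻ y, 1 - g y ∂ρ.fst = 0 := by
      rw [lintegral_sub hgm (by rw [hint]; exact ENNReal.one_ne_top)
        (Filter.Eventually.of_forall hle), hint, lintegral_one, measure_univ,
        tsub_self]
    have := (lintegral_eq_zero_iff (measurable_const.sub hgm)).mp hsub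
    filter_upwards [this] with y hy
    have : (1 : ℝ≥0∞) ≤ g y := by
      rw [← tsub_eq_zero_iff_le]; exact hy
    exact le_antisymm (hle y) this
  rw [← hfst]
  filter_upwards [hae] with y hy
  have : Prod.mk y ⁻¹' S = {x | f x = y} := by ext x; simp [hS]
  rw [← this]; exact hy

/-- The disintegration kernel recomposes the measure. -/
lemma condKernel_bind_aux
    {X Y : Type*}
    [MeasurableSpace X] [TopologicalSpace X] [PolishSpace X] [BorelSpace X]
    [MeasurableSpace Y] [TopologicalSpace Y] [PolishSpace Y] [BorelSpace Y]
    (P : Measure X) [IsProbabilityMeasure P]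
    (f : X → Y) (hf : Measurable f) [Nonempty X]
    {s : Set X} (hs : MeasurableSet s) :
    ∫⁻ y, (P.map (fun x => (f x, x))).condKernel y s ∂(P.map f) = P s := by
  set ρ : Measure (Y × X) := P.map (fun x => (f x, x)) with hρ
  have hmap : Measurable (fun x => (f x, x)) := hf.prodMk measurable_id
  haveI : IsProbabilityMeasure ρ := Measure.isProbabilityMeasure_map hmap.aemeasurable
  have hfst : ρ.fst = P.map f := by
    rw [Measure.fst, hρ, Measure.map_map measurable_fst hmap]
    rfl
  have h1 : ∫⁻ y, ρ.condKernel y s ∂ρ.fst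
      = (ρ.fst ⊗ₘ ρ.condKernel) (Prod.snd ⁻¹' s) := by
    rw [Measure.compProd_apply (measurable_snd hs)]
    rfl
  rw [← hfst, h1, ρ.disintegrate, hρ, Measure.map_apply hmap (measurable_snd hs)]
  rfl

lemma measurable_slice_aux
    {X Y : Type*} [MeasurableSpace X]
    [MeasurableSpace Y] [TopologicalSpace Y] [PolishSpace Y] [BorelSpace Y]
    (κ : ProbabilityTheory.Kernel Y X) [ProbabilityTheory.IsSFiniteKernel κ]
    (f : X → Y) (hf : Measurable f) :
    Measurable fun y => κ y {x | f x = y} := by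
  have hSm : MeasurableSet {p : Y × X | f p.2 = p.1} := by
    have : {p : Y × X | f p.2 = p.1}
        = (fun p : Y × X => (p.1, f p.2)) ⁻¹' (Set.diagonal Y) := by
      ext p; simp [Set.diagonal, eq_comm]
    rw [this]
    exact (measurable_fst.prodMk (hf.comp measurable_snd))
      isClosed_diagonal.measurableSet
  exact Kernel.measurable_kernel_prodMk_left (κ := κ) hSm

/-- The OT discrepancy with cost `d ∘ (f × f)` equals the OT discrepancy of the
pushforwards with cost `d`. -/
theorem otCost_pushforward
    {X Y : Type*}
    [MeasurableSpace X] [TopologicalSpace X] [PolishSpace X] [BorelSpace X]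
    [MeasurableSpace Y] [TopologicalSpace Y] [PolishSpace Y] [BorelSpace Y]
    (P Q : Measure X) [IsProbabilityMeasure P] [IsProbabilityMeasure Q]
    (f : X → Y) (hf : Measurable f)
    (d : Y × Y → ℝ≥0∞) (hd : Measurable d) :
    OTCost (fun x => d (f x.1, f x.2)) P Q = OTCost d (P.map f) (Q.map f) := by
  haveI : Nonempty X := P.nonempty_of_neZero
  have hmap : Measurable (fun x : X => (f x, x)) := hf.prodMk measurable_id
  have hpm : Measurable (Prod.map f f) := hf.prodMap hf
  have hc : Measurable (fun p : X × X => d (f p.1, f p.2)) :=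
    hd.comp ((hf.comp measurable_fst).prodMk (hf.comp measurable_snd))
  unfold OTCost
  apply le_antisymm
  · -- hard direction: lift a coupling of the pushforwards
    refine le_iInf₂ fun γ hγ => ?_
    obtain ⟨hγprob, hγ1, hγ2⟩ := hγ
    haveI := hγprob
    haveI : IsProbabilityMeasure (P.map (fun x => (f x, x))) :=
      Measure.isProbabilityMeasure_map hmap.aemeasurable
    haveI : IsProbabilityMeasure (Q.map (fun x => (f x, x))) :=
      Measure.isProbabilityMeasure_map hmap.aemeasurable
    set κP := (P.map (fun x => (f x, x))).condKernel with hκP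
    set κQ := (Q.map (fun x => (f x, x))).condKernel with hκQ
    set η : ProbabilityTheory.Kernel (Y × Y) (X × X) :=
      (κP.comap Prod.fst measurable_fst) ×ₖ (κQ.comap Prod.snd measurable_snd) with hη
    haveI : ProbabilityTheory.IsMarkovKernel η := by
      rw [hη]; infer_instance
    have hηapp : ∀ p : Y × Y, η p = (κP p.1).prod (κQ p.2) := fun p => by
      rw [hη, Kernel.prod_apply, Kernel.comap_apply, Kernel.comap_apply]
    set μ : Measure (X × X) := γ.bind η with hμ
    have hμprob : IsProbabilityMeasure μ := by
      constructor
      rw [hμ, Measure.bind_apply MeasurableSet.univ (Kernel.measurable η).aemeasurable]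
      simp
    have hfstμ : μ.map Prod.fst = P := by
      ext s hs
      rw [Measure.map_apply measurable_fst hs, hμ,
        Measure.bind_apply (measurable_fst hs) (Kernel.measurable η).aemeasurable]
      have h1 : ∀ p : Y × Y, η p (Prod.fst ⁻¹' s) = κP p.1 s := by
        intro p
        rw [hηapp p]
        have : Prod.fst ⁻¹' s = s ×ˢ (Set.univ : Set X) := by
          ext q; simp
        rw [this, Measure.prod_prod, measure_univ, mul_one]
      simp_rw [h1]
      have h2 := lintegral_map (μ := γ) (g := Prod.fst)
        (Kernel.measurable_coe κP hs) measurable_fst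
      rw [hγ1] at h2
      exact h2.symm.trans (condKernel_bind_aux P f hf hs)
    have hsndμ : μ.map Prod.snd = Q := by
      ext s hs
      rw [Measure.map_apply measurable_snd hs, hμ,
        Measure.bind_apply (measurable_snd hs) (Kernel.measurable η).aemeasurable]
      have h1 : ∀ p : Y × Y, η p (Prod.snd ⁻¹' s) = κQ p.2 s := by
        intro p
        rw [hηapp p]
        have : Prod.snd ⁻¹' s = (Set.univ : Set X) ×ˢ s := by
          ext q; simp
        rw [this, Measure.prod_prod, measure_univ, one_mul]
      simp_rw [h1]
      have h2 := lintegral_map (μ := γ) (g := Prod.snd)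
        (Kernel.measurable_coe κQ hs) measurable_snd
      rw [hγ2] at h2
      exact h2.symm.trans (condKernel_bind_aux Q f hf hs)
    refine iInf₂_le_of_le μ ⟨hμprob, hfstμ, hsndμ⟩ (le_of_eq ?_)
    rw [hμ, Measure.lintegral_bind (Kernel.measurable η).aemeasurable hc.aemeasurable]
    refine lintegral_congr_ae ?_
    have hP := condKernel_support_aux P f hf
    have hQ := condKernel_support_aux Q f hf
    rw [← hγ1] at hP
    rw [← hγ2] at hQ
    have hmeasP : MeasurableSet {y | κP y {x | f x = y} = 1} :=
      (measurable_slice_aux κP f hf) (measurableSet_singleton 1)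
    have hmeasQ : MeasurableSet {y | κQ y {x | f x = y} = 1} :=
      (measurable_slice_aux κQ f hf) (measurableSet_singleton 1)
    have hP' : ∀ᵐ p ∂γ, κP p.1 {x | f x = p.1} = 1 :=
      (MeasureTheory.ae_map_iff measurable_fst.aemeasurable hmeasP).mp hP
    have hQ' : ∀ᵐ p ∂γ, κQ p.2 {x | f x = p.2} = 1 :=
      (MeasureTheory.ae_map_iff measurable_snd.aemeasurable hmeasQ).mp hQ
    filter_upwards [hP', hQ'] with p h1 h2
    have hae1 : ∀ᵐ x1 ∂(κP p.1), f x1 = p.1 := by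
      rw [Filter.eventually_iff, mem_ae_iff]
      rw [show {x | f x = p.1}ᶜ = {x | ¬ f x = p.1} from rfl] at *
      exact (prob_compl_eq_zero_iff (hf (measurableSet_singleton p.1))).mpr h1
    have hae2 : ∀ᵐ x2 ∂(κQ p.2), f x2 = p.2 := by
      rw [Filter.eventually_iff, mem_ae_iff]
      exact (prob_compl_eq_zero_iff (hf (measurableSet_singleton p.2))).mpr h2
    rw [hηapp p, lintegral_prod _ hc.aemeasurable]
    calc ∫⁻ x1, ∫⁻ x2, d (f x1, f x2) ∂(κQ p.2) ∂(κP p.1)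
        = ∫⁻ _, d (p.1, p.2) ∂(κP p.1) := by
          refine lintegral_congr_ae ?_
          filter_upwards [hae1] with x1 hx1
          rw [hx1, show (∫⁻ x2, d (p.1, f x2) ∂(κQ p.2)) = ∫⁻ _, d (p.1, p.2) ∂(κQ p.2) from
            lintegral_congr_ae (by filter_upwards [hae2] with x2 hx2; rw [hx2]),
            lintegral_const, measure_univ, mul_one]
      _ = d p := by rw [lintegral_const, measure_univ, mul_one]
  · -- easy direction: push a coupling forward
    refine le_iInf₂ fun γ hγ => ?_
    obtain ⟨hγprob, hγ1, hγ2⟩ := hγ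
    haveI := hγprob
    have hmem : γ.map (Prod.map f f) ∈ couplings (P.map f) (Q.map f) := by
      refine ⟨Measure.isProbabilityMeasure_map hpm.aemeasurable, ?_, ?_⟩
      · rw [Measure.map_map measurable_fst hpm,
          show Prod.fst ∘ Prod.map f f = f ∘ Prod.fst from funext fun p => rfl,
          ← Measure.map_map hf measurable_fst, hγ1]
      · rw [Measure.map_map measurable_snd hpm,
          show Prod.snd ∘ Prod.map f f = f ∘ Prod.snd from funext fun p => rfl,
          ← Measure.map_map hf measurable_snd, hγ2]
    exact iInf₂_le_of_le (γ.map (Prod.map f f)) hmem (le_of_eq (lintegral_map hd hpm))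
end
end

section
/- Let X and Y be Polish spaces, P ∈ P(X), f : X → Y a Borel map, d : Y × Y → [0,∞] a Borel transportation cost on Y, and ε ≥ 0. Then the pushforward under f of the OT ambiguity set with cost d ∘ (f × f) is contained in the OT ambiguity set with cost d around the pushforward center: f_# B_ε^{d∘(f×f)}(P) ⊆ B_ε^d(f_#P). -/
open MeasureTheory
open scoped ENNReal

noncomputable section

/-- The optimal transport ambiguity set of radius `ε` around `P`, for cost `c`. -/
def ambiguitySet {X : Type*} [MeasurableSpace X] (c : X × X → ℝ≥0∞) (ε : ℝ≥0∞)
    (P : Measure X) : Set (Measure X) :=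
  {Q | IsProbabilityMeasure Q ∧ OTCost c P Q ≤ ε}

/-- Pushforward of the OT ambiguity set with cost `d ∘ (f × f)` is contained in the
OT ambiguity set with cost `d` around the pushforward center. -/
theorem pushforward_ambiguity_subset
    {X Y : Type*}
    [MeasurableSpace X] [TopologicalSpace X] [PolishSpace X] [BorelSpace X]
    [MeasurableSpace Y] [TopologicalSpace Y] [PolishSpace Y] [BorelSpace Y]
    (P : Measure X) [IsProbabilityMeasure P]
    (f : X → Y) (hf : Measurable f)
    (d : Y × Y → ℝ≥0∞) (hd : Measurable d) (ε : ℝ≥0∞) :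
    (fun μ => μ.map f) '' ambiguitySet (fun x => d (f x.1, f x.2)) ε P
      ⊆ ambiguitySet d ε (P.map f) := by
  rintro _ ⟨Q, ⟨hQprob, hQcost⟩, rfl⟩
  have hff : Measurable (fun x : X × X => (f x.1, f x.2)) :=
    (hf.comp measurable_fst).prodMk (hf.comp measurable_snd)
  refine ⟨MeasureTheory.Measure.isProbabilityMeasure_map hf.aemeasurable, le_trans ?_ hQcost⟩
  refine le_iInf₂ fun γ hγ => ?_
  obtain ⟨hγprob, hγ1, hγ2⟩ := hγ
  have hmem : γ.map (fun x : X × X => (f x.1, f x.2)) ∈ couplings (P.map f) (Q.map f) := by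
    refine ⟨MeasureTheory.Measure.isProbabilityMeasure_map hff.aemeasurable, ?_, ?_⟩
    · rw [Measure.map_map measurable_fst hff, ← hγ1, Measure.map_map hf measurable_fst]
      rfl
    · rw [Measure.map_map measurable_snd hff, ← hγ2, Measure.map_map hf measurable_snd]
      rfl
  calc OTCost d (P.map f) (Q.map f)
      ≤ ∫⁻ y, d y ∂(γ.map (fun x : X × X => (f x.1, f x.2))) := biInf_le _ hmem
    _ = ∫⁻ x, d (f x.1, f x.2) ∂γ := lintegral_map hd hff
end
end

section
/- Let X and Y be Polish spaces, P ∈ P(X), c : X × X → [0,∞] a Borel transportation cost on X, ε ≥ 0, and f : X → Y a Borel bijection whose inverse f⁻¹ : Y → X is Borel. Then the pushforward of the OT ambiguity set is exactly an OT ambiguity set: f_# B_ε^c(P) = B_ε^{c∘(f⁻¹×f⁻¹)}(f_#P), where c∘(f⁻¹×f⁻¹) is the cost (y₁,y₂) ↦ c(f⁻¹(y₁), f⁻¹(y₂)) on Y. -/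
open MeasureTheory
open scoped ENNReal

noncomputable section

lemma mem_couplings_map {X Y : Type*} [MeasurableSpace X] [MeasurableSpace Y]
    (e : X ≃ᵐ Y) {P Q : Measure X} {γ : Measure (X × X)} (h : γ ∈ couplings P Q) :
    γ.map (e.prodCongr e) ∈ couplings (P.map e) (Q.map e) := by
  obtain ⟨h1, h2, h3⟩ := h
  haveI := h1
  refine ⟨Measure.isProbabilityMeasure_map (e.prodCongr e).measurable.aemeasurable, ?_, ?_⟩
  · rw [Measure.map_map measurable_fst (e.prodCongr e).measurable, ← h2,
      Measure.map_map e.measurable measurable_fst]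
    rfl
  · rw [Measure.map_map measurable_snd (e.prodCongr e).measurable, ← h3,
      Measure.map_map e.measurable measurable_snd]
    rfl

lemma otcost_map {X Y : Type*} [MeasurableSpace X] [MeasurableSpace Y]
    (e : X ≃ᵐ Y) (c : X × X → ℝ≥0∞) (hc : Measurable c) (P Q : Measure X) :
    OTCost (fun y => c (e.symm y.1, e.symm y.2)) (P.map e) (Q.map e) = OTCost c P Q := by
  have hc' : Measurable (fun y : Y × Y => c (e.symm y.1, e.symm y.2)) :=
    hc.comp ((e.symm.measurable.comp measurable_fst).prodMk
      (e.symm.measurable.comp measurable_snd))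
  apply le_antisymm
  · refine le_iInf₂ fun γ hγ => ?_
    refine iInf₂_le_of_le _ (mem_couplings_map e hγ) (le_of_eq ?_)
    rw [lintegral_map hc' (e.prodCongr e).measurable]
    simp [MeasurableEquiv.prodCongr]
  · refine le_iInf₂ fun γ hγ => ?_
    have h2 := mem_couplings_map e.symm hγ
    rw [Measure.map_map e.symm.measurable e.measurable, e.symm_comp_self,
      Measure.map_id, Measure.map_map e.symm.measurable e.measurable, e.symm_comp_self,
      Measure.map_id] at h2
    refine iInf₂_le_of_le _ h2 (le_of_eq ?_)
    rw [lintegral_map hc (e.symm.prodCongr e.symm).measurable]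
    simp [MeasurableEquiv.prodCongr, Prod.map]

/-- Exact propagation of OT ambiguity sets under a Borel bijection with Borel inverse. -/
theorem pushforward_ambiguity_bijective
    {X Y : Type*}
    [MeasurableSpace X] [TopologicalSpace X] [PolishSpace X] [BorelSpace X]
    [MeasurableSpace Y] [TopologicalSpace Y] [PolishSpace Y] [BorelSpace Y]
    (P : Measure X) [IsProbabilityMeasure P]
    (c : X × X → ℝ≥0∞) (hc : Measurable c) (ε : ℝ≥0∞)
    (f : X → Y) (hf : Measurable f) (hbij : Function.Bijective f)
    (finv : Y → X) (hfinv : Measurable finv)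
    (hleft : ∀ x, finv (f x) = x) (hright : ∀ y, f (finv y) = y) :
    (fun μ => μ.map f) '' ambiguitySet c ε P
      = ambiguitySet (fun y => c (finv y.1, finv y.2)) ε (P.map f) := by
  let e : X ≃ᵐ Y := ⟨⟨f, finv, hleft, hright⟩, hf, hfinv⟩
  ext Q'
  constructor
  · rintro ⟨Q, ⟨hQprob, hQcost⟩, rfl⟩
    haveI := hQprob
    refine ⟨Measure.isProbabilityMeasure_map hf.aemeasurable, ?_⟩
    have := otcost_map e c hc P Q
    calc OTCost (fun y => c (finv y.1, finv y.2)) (P.map f) (Q.map f)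
        = OTCost c P Q := this
      _ ≤ ε := hQcost
  · rintro ⟨hprob, hcost⟩
    haveI := hprob
    refine ⟨Q'.map finv, ⟨Measure.isProbabilityMeasure_map hfinv.aemeasurable, ?_⟩, ?_⟩
    · have key := otcost_map e c hc P (Q'.map finv)
      have hmm : (Q'.map finv).map f = Q' := by
        rw [Measure.map_map hf hfinv]
        have : f ∘ finv = id := funext hright
        rw [this, Measure.map_id]
      rw [show (Q'.map finv).map ⇑e = (Q'.map finv).map f from rfl, hmm] at key
      rw [← key]
      exact hcost
    · show (Q'.map finv).map f = Q'
      rw [Measure.map_map hf hfinv]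
      have : f ∘ finv = id := funext hright
      rw [this, Measure.map_id]
end
end

section
/- Let X and Y be Polish spaces, P ∈ P(X), c : X × X → [0,∞] a Borel transportation cost on X, ε ≥ 0, and f : X → Y an injective Borel map admitting a Borel left inverse g : Y → X (i.e., g ∘ f = id_X). Then f_# B_ε^c(P) = (f ∘ g)_# B_ε^{c∘(g×g)}(f_#P), and consequently f_# B_ε^c(P) ⊆ B_ε^{c∘(g×g)}(f_#P), where c∘(g×g) is the cost (y₁,y₂) ↦ c(g(y₁), g(y₂)) on Y. -/
open MeasureTheory
open scoped ENNReal

noncomputable section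

lemma couplings_map_mem {X Y : Type*} [MeasurableSpace X] [MeasurableSpace Y]
    {h : X → Y} (hm : Measurable h) {P Q : Measure X} {γ : Measure (X × X)}
    (hγ : γ ∈ couplings P Q) :
    γ.map (Prod.map h h) ∈ couplings (P.map h) (Q.map h) := by
  obtain ⟨hp, h1, h2⟩ := hγ
  haveI := hp
  refine ⟨Measure.isProbabilityMeasure_map (hm.prodMap hm).aemeasurable, ?_, ?_⟩
  · rw [Measure.map_map measurable_fst (hm.prodMap hm)]
    have : (Prod.fst ∘ Prod.map h h : X × X → Y) = h ∘ Prod.fst := rfl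
    rw [this, ← Measure.map_map hm measurable_fst, h1]
  · rw [Measure.map_map measurable_snd (hm.prodMap hm)]
    have : (Prod.snd ∘ Prod.map h h : X × X → Y) = h ∘ Prod.snd := rfl
    rw [this, ← Measure.map_map hm measurable_snd, h2]

lemma OTCost_map_le {X Y : Type*} [MeasurableSpace X] [MeasurableSpace Y]
    (c : X × X → ℝ≥0∞) (c' : Y × Y → ℝ≥0∞) (hc' : Measurable c')
    {h : X → Y} (hm : Measurable h) (hcc : ∀ p : X × X, c' (h p.1, h p.2) = c p)
    (P Q : Measure X) :
    OTCost c' (P.map h) (Q.map h) ≤ OTCost c P Q := by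
  refine le_iInf₂ fun γ hγ => ?_
  refine iInf₂_le_of_le (γ.map (Prod.map h h)) (couplings_map_mem hm hγ) ?_
  rw [lintegral_map hc' (hm.prodMap hm)]
  refine le_of_eq (lintegral_congr fun x => ?_)
  exact hcc x

/-- Propagation of OT ambiguity sets under an injective Borel map with Borel left inverse. -/
theorem pushforward_ambiguity_injective
    {X Y : Type*}
    [MeasurableSpace X] [TopologicalSpace X] [PolishSpace X] [BorelSpace X]
    [MeasurableSpace Y] [TopologicalSpace Y] [PolishSpace Y] [BorelSpace Y]
    (P : Measure X) [IsProbabilityMeasure P]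
    (c : X × X → ℝ≥0∞) (hc : Measurable c) (ε : ℝ≥0∞)
    (f : X → Y) (hf : Measurable f) (hinj : Function.Injective f)
    (g : Y → X) (hg : Measurable g) (hgf : ∀ x, g (f x) = x) :
    (fun μ => μ.map f) '' ambiguitySet c ε P
        = (fun μ => μ.map (f ∘ g)) ''
            ambiguitySet (fun y => c (g y.1, g y.2)) ε (P.map f)
      ∧ (fun μ => μ.map f) '' ambiguitySet c ε P
          ⊆ ambiguitySet (fun y => c (g y.1, g y.2)) ε (P.map f) := by
  set c' : Y × Y → ℝ≥0∞ := fun y => c (g y.1, g y.2) with hc'def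
  have hc' : Measurable c' :=
    hc.comp ((hg.comp measurable_fst).prodMk (hg.comp measurable_snd))
  have hPfg : (P.map f).map g = P := by
    rw [Measure.map_map hg hf]
    have : (g ∘ f) = id := funext hgf
    rw [this, Measure.map_id]
  have key1 : ∀ Q : Measure X, OTCost c' (P.map f) (Q.map f) ≤ OTCost c P Q := by
    intro Q
    refine OTCost_map_le c c' hc' hf (fun p => ?_) P Q
    simp [hc'def, hgf]
  have key2 : ∀ R : Measure Y, OTCost c P (R.map g) ≤ OTCost c' (P.map f) R := by
    intro R
    have := OTCost_map_le c' c hc hg (fun p => rfl) (P.map f) R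
    rwa [hPfg] at this
  have hsub : (fun μ : Measure X => μ.map f) '' ambiguitySet c ε P
      ⊆ ambiguitySet c' ε (P.map f) := by
    rintro _ ⟨Q, ⟨hQp, hQc⟩, rfl⟩
    haveI := hQp
    exact ⟨Measure.isProbabilityMeasure_map hf.aemeasurable, le_trans (key1 Q) hQc⟩
  refine ⟨Set.Subset.antisymm ?_ ?_, hsub⟩
  · rintro _ ⟨Q, hQ, rfl⟩
    refine ⟨Q.map f, hsub ⟨Q, hQ, rfl⟩, ?_⟩
    show (Q.map f).map (f ∘ g) = Q.map f
    rw [Measure.map_map (hf.comp hg) hf]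
    congr 1
    funext x
    simp [Function.comp, hgf]
  · rintro _ ⟨R, ⟨hRp, hRc⟩, rfl⟩
    haveI := hRp
    refine ⟨R.map g, ⟨Measure.isProbabilityMeasure_map hg.aemeasurable, le_trans (key2 R) hRc⟩, ?_⟩
    show (R.map g).map f = R.map (f ∘ g)
    rw [Measure.map_map hf hg]
end
end

section
/- Let X and Y be Polish spaces, P ∈ P(X), c : X × X → [0,∞] a Borel transportation cost on X, ε ≥ 0, and f : X → Y a surjective Borel map admitting a Borel right inverse g : Y → X (i.e., f ∘ g = id_Y). Then f_# B_ε^{c∘(g×g)∘(f×f)}(P) = B_ε^{c∘(g×g)}(f_#P), and B_ε^{c∘(g×g)}(f_#P) ⊆ f_# B_ε^c((g∘f)_#P), where c∘(g×g)∘(f×f) is the cost (x₁,x₂) ↦ c(g(f(x₁)), g(f(x₂))) on X and c∘(g×g) is the cost (y₁,y₂) ↦ c(g(y₁), g(y₂)) on Y. -/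
open MeasureTheory
open scoped ENNReal ProbabilityTheory

noncomputable section

lemma otcost_le_of_forall {X Y : Type*} [MeasurableSpace X] [MeasurableSpace Y]
    {c : X × X → ℝ≥0∞} {c' : Y × Y → ℝ≥0∞} {P Q : Measure X} {P' Q' : Measure Y}
    (h : ∀ γ ∈ couplings P Q, ∃ γ' ∈ couplings P' Q', ∫⁻ y, c' y ∂γ' ≤ ∫⁻ x, c x ∂γ) :
    OTCost c' P' Q' ≤ OTCost c P Q := by
  refine le_iInf₂ fun γ hγ => ?_
  obtain ⟨γ', hγ', hle⟩ := h γ hγ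
  exact le_trans (iInf₂_le γ' hγ') hle

lemma couplings_map {X Y : Type*} [MeasurableSpace X] [MeasurableSpace Y]
    {P Q : Measure X} {γ : Measure (X × X)} (hγ : γ ∈ couplings P Q)
    {h : X → Y} (hh : Measurable h) :
    γ.map (Prod.map h h) ∈ couplings (P.map h) (Q.map h) := by
  obtain ⟨hp, h1, h2⟩ := hγ
  haveI := hp
  refine ⟨Measure.isProbabilityMeasure_map (hh.prodMap hh).aemeasurable, ?_, ?_⟩
  · rw [Measure.map_map measurable_fst (hh.prodMap hh), show (Prod.fst ∘ Prod.map h h : X × X → Y)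
      = h ∘ Prod.fst from rfl, ← Measure.map_map hh measurable_fst, h1]
  · rw [Measure.map_map measurable_snd (hh.prodMap hh), show (Prod.snd ∘ Prod.map h h : X × X → Y)
      = h ∘ Prod.snd from rfl, ← Measure.map_map hh measurable_snd, h2]

/-- Propagation of OT ambiguity sets under a surjective Borel map with Borel right inverse. -/
theorem pushforward_ambiguity_surjective
    {X Y : Type*}
    [MeasurableSpace X] [TopologicalSpace X] [PolishSpace X] [BorelSpace X]
    [MeasurableSpace Y] [TopologicalSpace Y] [PolishSpace Y] [BorelSpace Y]
    (P : Measure X) [IsProbabilityMeasure P]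
    (c : X × X → ℝ≥0∞) (hc : Measurable c) (ε : ℝ≥0∞)
    (f : X → Y) (hf : Measurable f) (hsurj : Function.Surjective f)
    (g : Y → X) (hg : Measurable g) (hfg : ∀ y, f (g y) = y) :
    (fun μ => μ.map f) ''
        ambiguitySet (fun x => c (g (f x.1), g (f x.2))) ε P
        = ambiguitySet (fun y => c (g y.1, g y.2)) ε (P.map f)
      ∧ ambiguitySet (fun y => c (g y.1, g y.2)) ε (P.map f)
          ⊆ (fun μ => μ.map f) '' ambiguitySet c ε (P.map (g ∘ f)) := by
  have hgg : Measurable (fun y : Y × Y => c (g y.1, g y.2)) :=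
    hc.comp ((hg.comp measurable_fst).prodMk (hg.comp measurable_snd))
  have hff : Measurable (fun x : X × X => c (g (f x.1), g (f x.2))) :=
    hc.comp (((hg.comp hf).comp measurable_fst).prodMk ((hg.comp hf).comp measurable_snd))
  have hmapQg : ∀ Q : Measure Y, (Q.map g).map f = Q := by
    intro Q
    rw [Measure.map_map hf hg]
    have : f ∘ g = id := funext hfg
    rw [this, Measure.map_id]
  constructor
  · apply Set.Subset.antisymm
    · rintro Q ⟨μ, ⟨hμp, hμc⟩, rfl⟩
      haveI := hμp
      refine ⟨Measure.isProbabilityMeasure_map hf.aemeasurable, le_trans ?_ hμc⟩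
      apply otcost_le_of_forall
      intro γ hγ
      refine ⟨γ.map (Prod.map f f), couplings_map hγ hf, le_of_eq ?_⟩
      rw [lintegral_map hgg (hf.prodMap hf)]
      rfl
    · rintro Q ⟨hQp, hQc⟩
      haveI := hQp
      refine ⟨Q.map g, ⟨Measure.isProbabilityMeasure_map hg.aemeasurable, le_trans ?_ hQc⟩, hmapQg Q⟩
      apply otcost_le_of_forall
      intro γ hγ
      obtain ⟨hγp, hγ1, hγ2⟩ := hγ
      haveI := hγp
      haveI : Nonempty Y := by
        by_contra h
        rw [not_nonempty_iff] at h
        have h1 := hQp.measure_univ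
        rw [Set.univ_eq_empty_iff.mpr h] at h1
        simp at h1
      set κ : ProbabilityTheory.Kernel Y Y := γ.condKernel with hκdef
      have hcomp : γ.fst ⊗ₘ κ = γ := γ.disintegrate γ.condKernel
      have hfst : γ.fst = P.map f := hγ1
      set κ' : ProbabilityTheory.Kernel X X :=
        (ProbabilityTheory.Kernel.comap κ f hf).map g with hκ'def
      haveI : ProbabilityTheory.IsMarkovKernel ((ProbabilityTheory.Kernel.comap κ f hf)) :=
        ProbabilityTheory.Kernel.IsMarkovKernel.comap κ hf
      haveI : ProbabilityTheory.IsMarkovKernel κ' :=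
        ProbabilityTheory.Kernel.IsMarkovKernel.map _ hg
      have hκ'app : ∀ x, κ' x = (κ (f x)).map g := fun x => by
        rw [hκ'def, ProbabilityTheory.Kernel.map_apply _ hg,
          ProbabilityTheory.Kernel.comap_apply]
      refine ⟨P ⊗ₘ κ', ⟨inferInstance, ?_, ?_⟩, le_of_eq ?_⟩
      · have := Measure.fst_compProd P κ'
        rwa [Measure.fst] at this
      · -- snd = Q.map g
        ext s hs
        rw [Measure.map_apply measurable_snd hs,
          Measure.compProd_apply (measurable_snd hs)]
        have h1 : ∀ x : X, κ' x (Prod.mk x ⁻¹' (Prod.snd ⁻¹' s)) = κ (f x) (g ⁻¹' s) := by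
          intro x
          rw [show Prod.mk x ⁻¹' (Prod.snd ⁻¹' s) = s from rfl, hκ'app,
            Measure.map_apply hg hs]
        simp_rw [h1]
        rw [← lintegral_map (κ.measurable_coe (hg hs)) hf, ← hfst]
        have h2 : ∫⁻ y, κ y (g ⁻¹' s) ∂γ.fst = (γ.fst ⊗ₘ κ) (Prod.snd ⁻¹' (g ⁻¹' s)) := by
          rw [Measure.compProd_apply (measurable_snd (hg hs))]
          rfl
        rw [h2, hcomp, Measure.map_apply hg hs, ← Measure.map_apply measurable_snd (hg hs), hγ2]
      · -- cost equality
        rw [Measure.lintegral_compProd hff]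
        have h1 : ∀ x : X, ∫⁻ x', c (g (f x), g (f x')) ∂(κ' x)
            = ∫⁻ y, c (g (f x), g y) ∂(κ (f x)) := by
          intro x
          have hm : Measurable fun x' : X => c (g (f x), g (f x')) :=
            hc.comp (measurable_const.prodMk ((hg.comp hf)))
          rw [hκ'app, lintegral_map hm hg]
          simp_rw [hfg]
        simp_rw [h1]
        have h2 : ∫⁻ x, ∫⁻ y, c (g (f x), g y) ∂(κ (f x)) ∂P
            = ∫⁻ y1, ∫⁻ y, c (g y1, g y) ∂(κ y1) ∂(P.map f) := by
          have hm2 : Measurable (Function.uncurry fun y1 y : Y => c (g y1, g y)) := hgg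
          rw [lintegral_map hm2.lintegral_kernel_prod_right hf]
        rw [h2, ← hfst, ← Measure.lintegral_compProd hgg, hcomp]
  · rintro Q ⟨hQp, hQc⟩
    haveI := hQp
    refine ⟨Q.map g, ⟨Measure.isProbabilityMeasure_map hg.aemeasurable, le_trans ?_ hQc⟩, hmapQg Q⟩
    apply otcost_le_of_forall
    intro γ hγ
    refine ⟨γ.map (Prod.map g g), ?_, le_of_eq ?_⟩
    · have := couplings_map hγ hg
      rwa [Measure.map_map hg hf] at this
    · rw [lintegral_map hc (hg.prodMap hg)]
      rfl
end
end

section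
/- Let X and Y be Polish spaces, P ∈ P(X), ε ≥ 0, and f : X → Y a surjective Borel map with Borel right inverse g : Y → X (i.e., f ∘ g = id_Y). Let c : X × X → [0,∞] be a Borel transportation cost satisfying c(g(f(x₁)), g(f(x₂))) ≤ c(x₁, x₂) for all x₁, x₂ ∈ X. Then f_# B_ε^c(P) ⊆ B_ε^{c∘(g×g)}(f_#P), where c∘(g×g) is the cost (y₁,y₂) ↦ c(g(y₁), g(y₂)) on Y. Moreover, if c(g(f(x₁)), g(f(x₂))) = c(x₁, x₂) for all x₁, x₂ ∈ X, then f_# B_ε^c(P) = B_ε^{c∘(g×g)}(f_#P). -/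
open MeasureTheory
open scoped ENNReal

noncomputable section

/-- Propagation of OT ambiguity sets under a surjective Borel map with Borel right inverse,
under the compatibility condition `c ∘ (g × g) ∘ (f × f) ≤ c`; exactness under equality. -/
theorem pushforward_ambiguity_surjective_compatible
    {X Y : Type*}
    [MeasurableSpace X] [TopologicalSpace X] [PolishSpace X] [BorelSpace X]
    [MeasurableSpace Y] [TopologicalSpace Y] [PolishSpace Y] [BorelSpace Y]
    (P : Measure X) [IsProbabilityMeasure P] (ε : ℝ≥0∞)
    (f : X → Y) (hf : Measurable f) (hsurj : Function.Surjective f)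
    (g : Y → X) (hg : Measurable g) (hfg : ∀ y, f (g y) = y)
    (c : X × X → ℝ≥0∞) (hc : Measurable c)
    (hle : ∀ x₁ x₂ : X, c (g (f x₁), g (f x₂)) ≤ c (x₁, x₂)) :
    (fun μ => μ.map f) '' ambiguitySet c ε P
        ⊆ ambiguitySet (fun y => c (g y.1, g y.2)) ε (P.map f)
      ∧ ((∀ x₁ x₂ : X, c (g (f x₁), g (f x₂)) = c (x₁, x₂)) →
          (fun μ => μ.map f) '' ambiguitySet c ε P
            = ambiguitySet (fun y => c (g y.1, g y.2)) ε (P.map f)) := by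
  classical
  have hc' : Measurable (fun y : Y × Y => c (g y.1, g y.2)) :=
    hc.comp ((hg.comp measurable_fst).prodMk (hg.comp measurable_snd))
  have hff : Measurable (Prod.map f f) := hf.prodMap hf
  haveI : Nonempty X := by
    by_contra h
    rw [not_nonempty_iff] at h
    have h1 : P Set.univ = 1 := measure_univ
    rw [Set.univ_eq_empty_iff.mpr h, measure_empty] at h1
    exact zero_ne_one h1
  haveI : Nonempty Y := ⟨f (Classical.arbitrary X)⟩
  -- Forward direction
  have fwd : ∀ Q ∈ ambiguitySet c ε P,
      Q.map f ∈ ambiguitySet (fun y : Y × Y => c (g y.1, g y.2)) ε (P.map f) := by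
    rintro Q ⟨hQp, hQcost⟩
    haveI := hQp
    refine ⟨Measure.isProbabilityMeasure_map hf.aemeasurable, le_trans ?_ hQcost⟩
    refine le_iInf₂ fun γ hγ => ?_
    obtain ⟨hγp, hγ1, hγ2⟩ := hγ
    haveI := hγp
    refine iInf₂_le_of_le (γ.map (Prod.map f f))
      ⟨Measure.isProbabilityMeasure_map hff.aemeasurable, ?_, ?_⟩ ?_
    · rw [Measure.map_map measurable_fst hff]
      have h1 : (Prod.fst ∘ Prod.map f f : X × X → Y) = f ∘ Prod.fst := rfl
      rw [h1, ← Measure.map_map hf measurable_fst, hγ1]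
    · rw [Measure.map_map measurable_snd hff]
      have h1 : (Prod.snd ∘ Prod.map f f : X × X → Y) = f ∘ Prod.snd := rfl
      rw [h1, ← Measure.map_map hf measurable_snd, hγ2]
    · rw [lintegral_map hc' hff]
      exact lintegral_mono fun z => hle z.1 z.2
  -- Backward direction (under equality)
  have bwd : (∀ x₁ x₂ : X, c (g (f x₁), g (f x₂)) = c (x₁, x₂)) →
      ∀ Q' ∈ ambiguitySet (fun y : Y × Y => c (g y.1, g y.2)) ε (P.map f),
        ∃ Q ∈ ambiguitySet c ε P, Q.map f = Q' := by
    rintro heq Q' ⟨hQ'p, hQ'cost⟩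
    haveI := hQ'p
    refine ⟨Q'.map g, ⟨Measure.isProbabilityMeasure_map hg.aemeasurable, ?_⟩, ?_⟩
    · -- OTCost c P (Q'.map g) ≤ ε
      refine le_trans (le_iInf₂ fun γ' hγ' => ?_) hQ'cost
      obtain ⟨hγ'p, hγ'1, hγ'2⟩ := hγ'
      haveI := hγ'p
      have hfst : γ'.fst = P.map f := hγ'1
      set κ : ProbabilityTheory.Kernel X X :=
        (γ'.condKernel.comap f hf).map g with hκ
      haveI : ProbabilityTheory.IsMarkovKernel κ :=
        ProbabilityTheory.Kernel.IsMarkovKernel.map _ hg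
      have hκapp : ∀ x, κ x = (γ'.condKernel (f x)).map g := fun x => by
        rw [hκ, ProbabilityTheory.Kernel.map_apply _ hg,
          ProbabilityTheory.Kernel.comap_apply]
      refine iInf₂_le_of_le (Measure.compProd P κ) ⟨inferInstance, ?_, ?_⟩ ?_
      · exact Measure.fst_compProd P κ
      · -- second marginal is Q'.map g
        ext s hs
        rw [Measure.map_apply measurable_snd hs,
          Measure.compProd_apply (measurable_snd hs)]
        have h1 : ∀ x : X, κ x (Prod.mk x ⁻¹' (Prod.snd ⁻¹' s)) =
            γ'.condKernel (f x) (g ⁻¹' s) := fun x => by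
          have h2 : (Prod.mk x ⁻¹' (Prod.snd ⁻¹' s)) = s := rfl
          rw [h2, hκapp x, Measure.map_apply hg hs]
        simp_rw [h1]
        rw [Measure.map_apply hg hs, ← hγ'2,
          Measure.map_apply measurable_snd (hg hs)]
        have hrhs : γ' (Prod.snd ⁻¹' (g ⁻¹' s))
            = ∫⁻ y, γ'.condKernel y (g ⁻¹' s) ∂γ'.fst := by
          conv_lhs => rw [← γ'.disintegrate γ'.condKernel]
          rw [Measure.compProd_apply (measurable_snd (hg hs))]
          rfl
        rw [hrhs, hfst,
          lintegral_map (ProbabilityTheory.Kernel.measurable_coe _ (hg hs)) hf]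
      · -- cost
        rw [Measure.lintegral_compProd hc]
        have step1 : ∫⁻ x, ∫⁻ x₂, c (x, x₂) ∂(κ x) ∂P
            = ∫⁻ x, ∫⁻ y₂, c (g (f x), g y₂) ∂(γ'.condKernel (f x)) ∂P := by
          refine lintegral_congr fun x => ?_
          rw [hκapp x, lintegral_map
            (show Measurable fun x₂ => c (x, x₂) from hc.comp measurable_prodMk_left) hg]
          refine lintegral_congr fun y₂ => ?_
          have h3 := heq x (g y₂)
          rw [hfg y₂] at h3
          exact h3.symm
        rw [step1]
        have hF : Measurable fun y₁ : Y => ∫⁻ y₂, c (g y₁, g y₂) ∂(γ'.condKernel y₁) :=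
          Measurable.lintegral_kernel_prod_right
            (hc.comp ((hg.comp measurable_fst).prodMk (hg.comp measurable_snd)))
        rw [← lintegral_map hF hf, ← hfst]
        rw [← Measure.lintegral_compProd hc', γ'.disintegrate γ'.condKernel]
    · -- (Q'.map g).map f = Q'
      rw [Measure.map_map hf hg]
      have h1 : f ∘ g = id := funext hfg
      rw [h1, Measure.map_id]
  refine ⟨?_, fun heq => ?_⟩
  · rintro _ ⟨Q, hQ, rfl⟩
    exact fwd Q hQ
  · refine Set.Subset.antisymm (by rintro _ ⟨Q, hQ, rfl⟩; exact fwd Q hQ) ?_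
    intro Q' hQ'
    obtain ⟨Q, hQ, hmap⟩ := bwd heq Q' hQ'
    exact ⟨Q, hQ, hmap⟩
end
end

section
/- Let X ∈ ℝ^{n×n} and Y ∈ ℝ^{m×m} be symmetric positive definite matrices, let A ∈ ℝ^{m×n}, and let A⁺ ∈ ℝ^{n×m} satisfy the Moore–Penrose conditions with respect to the inner products ⟨u,v⟩_X = uᵀXv on ℝⁿ and ⟨u,v⟩_Y = uᵀYv on ℝᵐ: A A⁺ A = A, A⁺ A A⁺ = A⁺, X(A⁺A) = (A⁺A)ᵀX, and Y(AA⁺) = (AA⁺)ᵀY. Let ĉ : ℝⁿ → [0,∞] be Borel and orthomonotone with respect to ⟨·,·⟩_X, i.e., ĉ(x₁ + x₂) ≥ ĉ(x₁) whenever x₁ᵀXx₂ = 0, and consider the translation-invariant cost c(x₁,x₂) = ĉ(x₁ − x₂). Then for every P ∈ P(ℝⁿ) and ε ≥ 0: A_# B_ε^ĉ(P) ⊆ (AA⁺)_# B_ε^{ĉ∘A⁺}(A_#P) = A_# B_ε^ĉ((A⁺A)_#P) ⊆ B_ε^{ĉ∘A⁺}(A_#P), where ĉ∘A⁺ is the translation-invariant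 cost on ℝᵐ given by (y₁,y₂) ↦ ĉ(A⁺y₁ − A⁺y₂), and A_# denotes pushforward under the linear map x ↦ Ax. -/
open MeasureTheory Matrix
open scoped ENNReal

noncomputable section

/-- `Matrix.mulVec` is measurable. -/
lemma measurable_mulVec_aux {m n : ℕ} (A : Matrix (Fin m) (Fin n) ℝ) :
    Measurable A.mulVec := by
  have h : A.mulVec = fun v => A.mulVecLin v := by
    funext v; simp [Matrix.mulVecLin_apply]
  rw [h]
  exact A.mulVecLin.continuous_of_finiteDimensional.measurable

/-- Pushing couplings forward: monotonicity of `OTCost` under a measurable map that does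
not increase the cost. -/
lemma otcost_map_le {α β : Type*} [MeasurableSpace α] [MeasurableSpace β]
    {f : α → β} (hf : Measurable f) {c₁ : α × α → ℝ≥0∞} {c₂ : β × β → ℝ≥0∞}
    (hc₂ : Measurable c₂) (hle : ∀ x₁ x₂, c₂ (f x₁, f x₂) ≤ c₁ (x₁, x₂))
    (P Q : Measure α) :
    OTCost c₂ (P.map f) (Q.map f) ≤ OTCost c₁ P Q := by
  refine le_iInf₂ fun γ hγ => ?_
  obtain ⟨hprob, hfst, hsnd⟩ := hγ
  have hff : Measurable (Prod.map f f) := hf.prodMap hf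
  have hmem : γ.map (Prod.map f f) ∈ couplings (P.map f) (Q.map f) := by
    refine ⟨Measure.isProbabilityMeasure_map hff.aemeasurable, ?_, ?_⟩
    · rw [Measure.map_map measurable_fst hff]
      have h : (Prod.fst ∘ Prod.map f f : α × α → β) = f ∘ Prod.fst := rfl
      rw [h, ← Measure.map_map hf measurable_fst, hfst]
    · rw [Measure.map_map measurable_snd hff]
      have h : (Prod.snd ∘ Prod.map f f : α × α → β) = f ∘ Prod.snd := rfl
      rw [h, ← Measure.map_map hf measurable_snd, hsnd]
  calc OTCost c₂ (P.map f) (Q.map f)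
      ≤ ∫⁻ y, c₂ y ∂(γ.map (Prod.map f f)) := iInf₂_le _ hmem
    _ = ∫⁻ x, c₂ (Prod.map f f x) ∂γ := lintegral_map hc₂ hff
    _ ≤ ∫⁻ x, c₁ x ∂γ := lintegral_mono fun x => hle x.1 x.2

/-- Propagation of OT ambiguity sets under an arbitrary linear map, for a
translation-invariant orthomonotone transportation cost: the chain of inclusions
`A_# B_ε^ĉ(P) ⊆ (AA⁺)_# B_ε^{ĉ∘A⁺}(A_#P) = A_# B_ε^ĉ((A⁺A)_#P) ⊆ B_ε^{ĉ∘A⁺}(A_#P)`. -/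
theorem pushforward_ambiguity_linear_chain
    {n m : ℕ}
    (X : Matrix (Fin n) (Fin n) ℝ) (Y : Matrix (Fin m) (Fin m) ℝ)
    (hX : X.PosDef) (hY : Y.PosDef)
    (A : Matrix (Fin m) (Fin n) ℝ) (Ap : Matrix (Fin n) (Fin m) ℝ)
    (h1 : A * Ap * A = A) (h2 : Ap * A * Ap = Ap)
    (h3 : X * (Ap * A) = (Ap * A)ᵀ * X)
    (h4 : Y * (A * Ap) = (A * Ap)ᵀ * Y)
    (cc : (Fin n → ℝ) → ℝ≥0∞) (hcc : Measurable cc)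
    (hortho : ∀ x₁ x₂ : Fin n → ℝ, x₁ ⬝ᵥ X.mulVec x₂ = 0 → cc x₁ ≤ cc (x₁ + x₂))
    (P : Measure (Fin n → ℝ)) [IsProbabilityMeasure P] (ε : ℝ≥0∞) :
    ((fun μ => μ.map A.mulVec) '' ambiguitySet (fun x => cc (x.1 - x.2)) ε P
        ⊆ (fun μ => μ.map (A * Ap).mulVec) ''
            ambiguitySet (fun y => cc (Ap.mulVec y.1 - Ap.mulVec y.2)) ε (P.map A.mulVec))
      ∧ ((fun μ => μ.map (A * Ap).mulVec) ''
            ambiguitySet (fun y => cc (Ap.mulVec y.1 - Ap.mulVec y.2)) ε (P.map A.mulVec)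
          = (fun μ => μ.map A.mulVec) ''
              ambiguitySet (fun x => cc (x.1 - x.2)) ε (P.map (Ap * A).mulVec))
      ∧ ((fun μ => μ.map A.mulVec) ''
            ambiguitySet (fun x => cc (x.1 - x.2)) ε (P.map (Ap * A).mulVec)
          ⊆ ambiguitySet (fun y => cc (Ap.mulVec y.1 - Ap.mulVec y.2)) ε (P.map A.mulVec)) := by
  -- notation
  have hA : Measurable A.mulVec := measurable_mulVec_aux A
  have hAp : Measurable Ap.mulVec := measurable_mulVec_aux Ap
  have hM : Measurable (Ap * A).mulVec := measurable_mulVec_aux (Ap * A)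
  have hN : Measurable (A * Ap).mulVec := measurable_mulVec_aux (A * Ap)
  -- measurability of the costs
  have hcn : Measurable (fun x : (Fin n → ℝ) × (Fin n → ℝ) => cc (x.1 - x.2)) :=
    hcc.comp (measurable_fst.sub measurable_snd)
  have hcm : Measurable (fun y : (Fin m → ℝ) × (Fin m → ℝ) =>
      cc (Ap.mulVec y.1 - Ap.mulVec y.2)) :=
    hcc.comp ((hAp.comp measurable_fst).sub (hAp.comp measurable_snd))
  -- algebraic facts
  have hMM : (Ap * A) * (Ap * A) = Ap * A := by
    have : (Ap * A) * (Ap * A) = Ap * (A * Ap * A) := by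
      simp only [Matrix.mul_assoc]
    rw [this, h1]
  have hXsymm : Xᵀ = X := hX.isHermitian.eq
  -- the key orthomonotonicity consequence
  have key : ∀ z : Fin n → ℝ, cc ((Ap * A).mulVec z) ≤ cc z := by
    intro z
    set M := Ap * A with hMdef
    have hzero : (X * (1 - M))ᵀ * M = 0 := by
      calc (X * (1 - M))ᵀ * M = (1 - M)ᵀ * X * M := by
            rw [Matrix.transpose_mul, hXsymm]
        _ = (X - Mᵀ * X) * M := by
            rw [Matrix.transpose_sub, Matrix.transpose_one, Matrix.sub_mul, Matrix.one_mul]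
        _ = (X - X * M) * M := by rw [← h3]
        _ = X * M - X * (M * M) := by
            rw [Matrix.sub_mul, Matrix.mul_assoc]
        _ = 0 := by rw [hMM]; simp
    have horth : (M.mulVec z) ⬝ᵥ X.mulVec (z - M.mulVec z) = 0 := by
      have hq : z - M.mulVec z = (1 - M).mulVec z := by
        rw [Matrix.sub_mulVec, Matrix.one_mulVec]
      rw [hq, Matrix.mulVec_mulVec, Matrix.dotProduct_mulVec,
        ← Matrix.mulVec_transpose, Matrix.mulVec_mulVec, hzero,
        Matrix.zero_mulVec, zero_dotProduct]
      
    have := hortho (M.mulVec z) (z - M.mulVec z) horth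
    simpa [add_sub_cancel] using this
  -- cost comparisons under pushforward
  have L2 : ∀ (P' Q' : Measure (Fin n → ℝ)),
      OTCost (fun y : (Fin m → ℝ) × (Fin m → ℝ) => cc (Ap.mulVec y.1 - Ap.mulVec y.2))
        (P'.map A.mulVec) (Q'.map A.mulVec)
        ≤ OTCost (fun x => cc (x.1 - x.2)) P' Q' := by
    intro P' Q'
    refine otcost_map_le hA hcm (fun x₁ x₂ => ?_) P' Q'
    show cc (Ap.mulVec (A.mulVec x₁) - Ap.mulVec (A.mulVec x₂)) ≤ cc (x₁ - x₂)
    rw [Matrix.mulVec_mulVec, Matrix.mulVec_mulVec, ← Matrix.mulVec_sub]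
    exact key (x₁ - x₂)
  have L3 : ∀ (P' Q' : Measure (Fin m → ℝ)),
      OTCost (fun x : (Fin n → ℝ) × (Fin n → ℝ) => cc (x.1 - x.2))
        (P'.map Ap.mulVec) (Q'.map Ap.mulVec)
        ≤ OTCost (fun y => cc (Ap.mulVec y.1 - Ap.mulVec y.2)) P' Q' := by
    intro P' Q'
    exact otcost_map_le hAp hcn (fun y₁ y₂ => le_refl _) P' Q'
  have L4 : ∀ (P' Q' : Measure (Fin n → ℝ)),
      OTCost (fun x : (Fin n → ℝ) × (Fin n → ℝ) => cc (x.1 - x.2))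
        (P'.map (Ap * A).mulVec) (Q'.map (Ap * A).mulVec)
        ≤ OTCost (fun x => cc (x.1 - x.2)) P' Q' := by
    intro P' Q'
    refine otcost_map_le hM hcn (fun x₁ x₂ => ?_) P' Q'
    show cc ((Ap * A).mulVec x₁ - (Ap * A).mulVec x₂) ≤ cc (x₁ - x₂)
    rw [← Matrix.mulVec_sub]
    exact key (x₁ - x₂)
  -- function composition identities
  have cAM : (A.mulVec ∘ (Ap * A).mulVec) = A.mulVec := by
    funext z
    show A.mulVec ((Ap * A).mulVec z) = A.mulVec z
    rw [Matrix.mulVec_mulVec, ← Matrix.mul_assoc, h1]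
  have cNA : ((A * Ap).mulVec ∘ A.mulVec) = A.mulVec := by
    funext z
    show (A * Ap).mulVec (A.mulVec z) = A.mulVec z
    rw [Matrix.mulVec_mulVec, h1]
  have cApA : (Ap.mulVec ∘ A.mulVec) = (Ap * A).mulVec := by
    funext z
    show Ap.mulVec (A.mulVec z) = (Ap * A).mulVec z
    rw [Matrix.mulVec_mulVec]
  have cAAp : (A.mulVec ∘ Ap.mulVec) = (A * Ap).mulVec := by
    funext z
    show A.mulVec (Ap.mulVec z) = (A * Ap).mulVec z
    rw [Matrix.mulVec_mulVec]
  -- measure identities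
  have mPA : (P.map (Ap * A).mulVec).map A.mulVec = P.map A.mulVec := by
    rw [Measure.map_map hA hM, cAM]
  have mPM : (P.map A.mulVec).map Ap.mulVec = P.map (Ap * A).mulVec := by
    rw [Measure.map_map hAp hA, cApA]
  -- the third inclusion (also used for the second statement)
  have third : (fun μ => μ.map A.mulVec) ''
      ambiguitySet (fun x => cc (x.1 - x.2)) ε (P.map (Ap * A).mulVec)
        ⊆ ambiguitySet (fun y => cc (Ap.mulVec y.1 - Ap.mulVec y.2)) ε (P.map A.mulVec) := by
    rintro _ ⟨Q', ⟨hQ'prob, hQ'cost⟩, rfl⟩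
    refine ⟨Measure.isProbabilityMeasure_map hA.aemeasurable, ?_⟩
    calc OTCost (fun y => cc (Ap.mulVec y.1 - Ap.mulVec y.2))
          (P.map A.mulVec) (Q'.map A.mulVec)
        = OTCost (fun y => cc (Ap.mulVec y.1 - Ap.mulVec y.2))
            ((P.map (Ap * A).mulVec).map A.mulVec) (Q'.map A.mulVec) := by rw [mPA]
      _ ≤ OTCost (fun x => cc (x.1 - x.2)) (P.map (Ap * A).mulVec) Q' := L2 _ _
      _ ≤ ε := hQ'cost
  refine ⟨?_, ?_, third⟩
  · -- first inclusion
    rintro _ ⟨Q, ⟨hQprob, hQcost⟩, rfl⟩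
    haveI := hQprob
    refine ⟨Q.map A.mulVec, ⟨Measure.isProbabilityMeasure_map hA.aemeasurable, ?_⟩, ?_⟩
    · exact le_trans (L2 P Q) hQcost
    · show (Q.map A.mulVec).map (A * Ap).mulVec = Q.map A.mulVec
      rw [Measure.map_map hN hA, cNA]
  · -- the equality
    ext μ
    constructor
    · rintro ⟨Q, ⟨hQprob, hQcost⟩, rfl⟩
      haveI := hQprob
      refine ⟨Q.map Ap.mulVec, ⟨Measure.isProbabilityMeasure_map hAp.aemeasurable, ?_⟩, ?_⟩
      · calc OTCost (fun x => cc (x.1 - x.2)) (P.map (Ap * A).mulVec) (Q.map Ap.mulVec)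
            = OTCost (fun x => cc (x.1 - x.2))
                ((P.map A.mulVec).map Ap.mulVec) (Q.map Ap.mulVec) := by rw [mPM]
          _ ≤ OTCost (fun y => cc (Ap.mulVec y.1 - Ap.mulVec y.2)) (P.map A.mulVec) Q :=
              L3 _ _
          _ ≤ ε := hQcost
      · show (Q.map Ap.mulVec).map A.mulVec = Q.map (A * Ap).mulVec
        rw [Measure.map_map hA hAp, cAAp]
    · rintro ⟨Q', hQ', rfl⟩
      have hmem := third ⟨Q', hQ', rfl⟩
      refine ⟨Q'.map A.mulVec, hmem, ?_⟩
      show (Q'.map A.mulVec).map (A * Ap).mulVec = Q'.map A.mulVec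
      rw [Measure.map_map hN hA, cNA]
end
end

section
/- Let P, Q ∈ P(ℝⁿ), let p ≥ 1, and let ĉ : ℝⁿ → [0,∞) be Borel, defining the translation-invariant cost c(x₁,x₂) = ĉ(x₁ − x₂), such that ĉ^{1/p} satisfies the triangle inequality: ĉ(x₁ − x₃)^{1/p} ≤ ĉ(x₁ − x₂)^{1/p} + ĉ(x₂ − x₃)^{1/p} for all x₁, x₂, x₃ ∈ ℝⁿ. Then for all ε₁, ε₂ ≥ 0: B_{ε₁}^ĉ(P) ∗ B_{ε₂}^ĉ(Q) ⊆ B_{(ε₁^{1/p} + ε₂^{1/p})^p}^ĉ(P ∗ Q). -/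
open MeasureTheory
open scoped ENNReal

noncomputable section

/-- Convolution of two measures on `ℝⁿ`: pushforward of the product measure under addition. -/
def mconv {n : ℕ} (P Q : Measure (Fin n → ℝ)) : Measure (Fin n → ℝ) :=
  (P.prod Q).map (fun p => p.1 + p.2)

/-- `rpow` with positive exponent commutes with bounded infima in `ℝ≥0∞`. -/
lemma rpow_biInf_aux {ι : Type*} {S : Set ι} {F : ι → ℝ≥0∞} {c : ℝ} (hc : 0 < c) :
    (⨅ γ ∈ S, F γ) ^ c = ⨅ γ ∈ S, (F γ) ^ c := by
  have h1 := (ENNReal.orderIsoRpow c hc).map_iInf (fun γ : ι => ⨅ _ : γ ∈ S, F γ)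
  simp only [ENNReal.orderIsoRpow_apply] at h1
  rw [h1]
  refine iInf_congr fun γ => ?_
  have h2 := (ENNReal.orderIsoRpow c hc).map_iInf (fun _ : γ ∈ S => F γ)
  simpa only [ENNReal.orderIsoRpow_apply] using h2

private lemma rpow_one_div_rpow {x : ℝ≥0∞} {p : ℝ} (hp : p ≠ 0) :
    (x ^ (1 / p)) ^ p = x := by
  rw [← ENNReal.rpow_mul, one_div_mul_cancel hp, ENNReal.rpow_one]

/-- Per-coupling bound: the OT cost between convolutions, to the power `1/p`, is bounded by the
sum of the `1/p` powers of the transport costs of any pair of couplings. -/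
lemma coupling_bound_aux {n : ℕ} {P Q P' Q' : Measure (Fin n → ℝ)}
    [IsProbabilityMeasure P] [IsProbabilityMeasure Q]
    {p : ℝ} (hp : 1 ≤ p)
    {cc : (Fin n → ℝ) → ℝ≥0∞} (hcc : Measurable cc)
    (htri : ∀ x₁ x₂ x₃ : Fin n → ℝ,
      cc (x₁ - x₃) ^ (1 / p) ≤ cc (x₁ - x₂) ^ (1 / p) + cc (x₂ - x₃) ^ (1 / p))
    {γ₁ γ₂ : Measure ((Fin n → ℝ) × (Fin n → ℝ))}
    (hγ₁ : γ₁ ∈ couplings P P') (hγ₂ : γ₂ ∈ couplings Q Q') :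
    OTCost (fun x => cc (x.1 - x.2)) (mconv P Q) (mconv P' Q') ^ (1 / p) ≤
      (∫⁻ x, cc (x.1 - x.2) ∂γ₁) ^ (1 / p) + (∫⁻ x, cc (x.1 - x.2) ∂γ₂) ^ (1 / p) := by
  obtain ⟨hprob₁, hfst₁, hsnd₁⟩ := hγ₁
  obtain ⟨hprob₂, hfst₂, hsnd₂⟩ := hγ₂
  have hppos : 0 < p := lt_of_lt_of_le one_pos hp
  set T : (((Fin n → ℝ) × (Fin n → ℝ))) × (((Fin n → ℝ) × (Fin n → ℝ))) → ((Fin n → ℝ) × (Fin n → ℝ)) := fun a => (a.1.1 + a.2.1, a.1.2 + a.2.2) with hT_def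
  have hT : Measurable T :=
    (measurable_fst.fst.add measurable_snd.fst).prodMk
      (measurable_fst.snd.add measurable_snd.snd)
  have hcost : Measurable (fun x : ((Fin n → ℝ) × (Fin n → ℝ)) => cc (x.1 - x.2)) :=
    hcc.comp' (measurable_fst.sub measurable_snd)
  set γ : Measure (((Fin n → ℝ) × (Fin n → ℝ))) := (γ₁.prod γ₂).map T with hγ_def
  have hγprob : IsProbabilityMeasure γ := Measure.isProbabilityMeasure_map hT.aemeasurable
  have hmem : γ ∈ couplings (mconv P Q) (mconv P' Q') := by
    refine ⟨hγprob, ?_, ?_⟩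
    · rw [hγ_def, Measure.map_map measurable_fst hT]
      have h : (Prod.fst ∘ T) =
          (fun q : ((Fin n → ℝ) × (Fin n → ℝ)) => q.1 + q.2) ∘ Prod.map Prod.fst Prod.fst := rfl
      rw [h, ← Measure.map_map (by fun_prop) (measurable_fst.prodMap measurable_fst),
        ← Measure.map_prod_map _ _ measurable_fst measurable_fst, hfst₁, hfst₂, mconv]
    · rw [hγ_def, Measure.map_map measurable_snd hT]
      have h : (Prod.snd ∘ T) =
          (fun q : ((Fin n → ℝ) × (Fin n → ℝ)) => q.1 + q.2) ∘ Prod.map Prod.snd Prod.snd := rfl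
      rw [h, ← Measure.map_map (by fun_prop) (measurable_snd.prodMap measurable_snd),
        ← Measure.map_prod_map _ _ measurable_snd measurable_snd, hsnd₁, hsnd₂, mconv]
  have hle : OTCost (fun x => cc (x.1 - x.2)) (mconv P Q) (mconv P' Q') ≤
      ∫⁻ x, cc (x.1 - x.2) ∂γ := iInf₂_le γ hmem
  set f : (((Fin n → ℝ) × (Fin n → ℝ))) × (((Fin n → ℝ) × (Fin n → ℝ))) → ℝ≥0∞ := fun a => cc (a.1.1 - a.1.2) ^ (1 / p) with hf_def
  set g : (((Fin n → ℝ) × (Fin n → ℝ))) × (((Fin n → ℝ) × (Fin n → ℝ))) → ℝ≥0∞ := fun a => cc (a.2.1 - a.2.2) ^ (1 / p) with hg_def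
  have hfmeas : AEMeasurable f (γ₁.prod γ₂) :=
    (ENNReal.continuous_rpow_const.measurable.comp'
      (hcc.comp' (measurable_fst.fst.sub measurable_fst.snd))).aemeasurable
  have hgmeas : AEMeasurable g (γ₁.prod γ₂) :=
    (ENNReal.continuous_rpow_const.measurable.comp'
      (hcc.comp' (measurable_snd.fst.sub measurable_snd.snd))).aemeasurable
  have key : ∫⁻ x, cc (x.1 - x.2) ∂γ ≤ ∫⁻ a, (f + g) a ^ p ∂(γ₁.prod γ₂) := by
    rw [hγ_def, lintegral_map hcost hT]
    refine lintegral_mono fun a => ?_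
    have h := htri (a.1.1 + a.2.1) (a.1.2 + a.2.1) (a.1.2 + a.2.2)
    rw [add_sub_add_right_eq_sub, add_sub_add_left_eq_sub] at h
    have h2 := ENNReal.rpow_le_rpow h hppos.le
    rw [rpow_one_div_rpow hppos.ne'] at h2
    exact h2
  have hfp : ∫⁻ a, f a ^ p ∂(γ₁.prod γ₂) = ∫⁻ x, cc (x.1 - x.2) ∂γ₁ := by
    have h1 : ∀ a : (((Fin n → ℝ) × (Fin n → ℝ))) × (((Fin n → ℝ) × (Fin n → ℝ))), f a ^ p = cc (a.1.1 - a.1.2) := fun a =>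
      rpow_one_div_rpow hppos.ne'
    simp only [h1]
    have h2 : ∫⁻ a : (((Fin n → ℝ) × (Fin n → ℝ))) × (((Fin n → ℝ) × (Fin n → ℝ))), cc (a.1.1 - a.1.2) ∂(γ₁.prod γ₂)
        = ∫⁻ x, cc (x.1 - x.2) ∂((γ₁.prod γ₂).map Prod.fst) :=
      (lintegral_map hcost measurable_fst).symm
    rw [h2, Measure.map_fst_prod, measure_univ, one_smul]
  have hgp : ∫⁻ a, g a ^ p ∂(γ₁.prod γ₂) = ∫⁻ x, cc (x.1 - x.2) ∂γ₂ := by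
    have h1 : ∀ a : (((Fin n → ℝ) × (Fin n → ℝ))) × (((Fin n → ℝ) × (Fin n → ℝ))), g a ^ p = cc (a.2.1 - a.2.2) := fun a =>
      rpow_one_div_rpow hppos.ne'
    simp only [h1]
    have h2 : ∫⁻ a : (((Fin n → ℝ) × (Fin n → ℝ))) × (((Fin n → ℝ) × (Fin n → ℝ))), cc (a.2.1 - a.2.2) ∂(γ₁.prod γ₂)
        = ∫⁻ x, cc (x.1 - x.2) ∂((γ₁.prod γ₂).map Prod.snd) :=
      (lintegral_map hcost measurable_snd).symm
    rw [h2, Measure.map_snd_prod, measure_univ, one_smul]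
  calc OTCost (fun x => cc (x.1 - x.2)) (mconv P Q) (mconv P' Q') ^ (1 / p)
      ≤ (∫⁻ a, (f + g) a ^ p ∂(γ₁.prod γ₂)) ^ (1 / p) :=
        ENNReal.rpow_le_rpow (hle.trans key) (by positivity)
    _ ≤ (∫⁻ a, f a ^ p ∂(γ₁.prod γ₂)) ^ (1 / p) + (∫⁻ a, g a ^ p ∂(γ₁.prod γ₂)) ^ (1 / p) :=
        ENNReal.lintegral_Lp_add_le hfmeas hgmeas hp
    _ = (∫⁻ x, cc (x.1 - x.2) ∂γ₁) ^ (1 / p) + (∫⁻ x, cc (x.1 - x.2) ∂γ₂) ^ (1 / p) := by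
        rw [hfp, hgp]

/-- The convolution of two OT ambiguity sets is contained in an OT ambiguity set around the
convolution of the centers, with radius `(ε₁^{1/p} + ε₂^{1/p})^p`. -/
theorem conv_ambiguity_subset
    {n : ℕ} (P Q : Measure (Fin n → ℝ))
    [IsProbabilityMeasure P] [IsProbabilityMeasure Q]
    (p : ℝ) (hp : 1 ≤ p)
    (cc : (Fin n → ℝ) → ℝ≥0∞) (hcc : Measurable cc) (hfin : ∀ u, cc u ≠ ∞)
    (htri : ∀ x₁ x₂ x₃ : Fin n → ℝ,
      cc (x₁ - x₃) ^ (1 / p) ≤ cc (x₁ - x₂) ^ (1 / p) + cc (x₂ - x₃) ^ (1 / p))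
    (ε₁ ε₂ : ℝ≥0∞) :
    Set.image2 mconv
        (ambiguitySet (fun x => cc (x.1 - x.2)) ε₁ P)
        (ambiguitySet (fun x => cc (x.1 - x.2)) ε₂ Q)
      ⊆ ambiguitySet (fun x => cc (x.1 - x.2))
          ((ε₁ ^ (1 / p) + ε₂ ^ (1 / p)) ^ p) (mconv P Q) := by
  rintro R ⟨P', ⟨hP'prob, hP'cost⟩, Q', ⟨hQ'prob, hQ'cost⟩, rfl⟩
  haveI := hP'prob
  haveI := hQ'prob
  have hppos : 0 < p := lt_of_lt_of_le one_pos hp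
  have hinv : (0 : ℝ) < 1 / p := by positivity
  refine ⟨Measure.isProbabilityMeasure_map (measurable_fst.add measurable_snd).aemeasurable, ?_⟩
  have hkey : OTCost (fun x => cc (x.1 - x.2)) (mconv P Q) (mconv P' Q') ^ (1 / p)
      ≤ ε₁ ^ (1 / p) + ε₂ ^ (1 / p) := by
    apply ENNReal.le_of_forall_pos_le_add
    intro η hη hb
    obtain ⟨hb₁, hb₂⟩ := ENNReal.add_lt_top.mp hb
    have hη2 : ((η : ℝ≥0∞) / 2) ≠ 0 := by
      simp [ENNReal.div_eq_zero_iff, hη.ne']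
    -- find near-optimal couplings
    have h₁ : (⨅ γ ∈ couplings P P', (∫⁻ x, cc (x.1 - x.2) ∂γ) ^ (1 / p))
        < ε₁ ^ (1 / p) + (η : ℝ≥0∞) / 2 := by
      rw [← rpow_biInf_aux hinv]
      calc (OTCost (fun x : _ × _ => cc (x.1 - x.2)) P P') ^ (1 / p)
          ≤ ε₁ ^ (1 / p) := ENNReal.rpow_le_rpow hP'cost hinv.le
        _ < ε₁ ^ (1 / p) + (η : ℝ≥0∞) / 2 := ENNReal.lt_add_right hb₁.ne hη2
    have h₂ : (⨅ γ ∈ couplings Q Q', (∫⁻ x, cc (x.1 - x.2) ∂γ) ^ (1 / p))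
        < ε₂ ^ (1 / p) + (η : ℝ≥0∞) / 2 := by
      rw [← rpow_biInf_aux hinv]
      calc (OTCost (fun x : _ × _ => cc (x.1 - x.2)) Q Q') ^ (1 / p)
          ≤ ε₂ ^ (1 / p) := ENNReal.rpow_le_rpow hQ'cost hinv.le
        _ < ε₂ ^ (1 / p) + (η : ℝ≥0∞) / 2 := ENNReal.lt_add_right hb₂.ne hη2
    obtain ⟨γ₁, hmem₁, hc₁⟩ : ∃ γ₁ ∈ couplings P P',
        (∫⁻ x, cc (x.1 - x.2) ∂γ₁) ^ (1 / p) < ε₁ ^ (1 / p) + (η : ℝ≥0∞) / 2 := by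
      obtain ⟨γ₁, h⟩ := iInf_lt_iff.mp h₁
      obtain ⟨hm, h⟩ := iInf_lt_iff.mp h
      exact ⟨γ₁, hm, h⟩
    obtain ⟨γ₂, hmem₂, hc₂⟩ : ∃ γ₂ ∈ couplings Q Q',
        (∫⁻ x, cc (x.1 - x.2) ∂γ₂) ^ (1 / p) < ε₂ ^ (1 / p) + (η : ℝ≥0∞) / 2 := by
      obtain ⟨γ₂, h⟩ := iInf_lt_iff.mp h₂
      obtain ⟨hm, h⟩ := iInf_lt_iff.mp h
      exact ⟨γ₂, hm, h⟩
    calc OTCost (fun x => cc (x.1 - x.2)) (mconv P Q) (mconv P' Q') ^ (1 / p)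
        ≤ (∫⁻ x, cc (x.1 - x.2) ∂γ₁) ^ (1 / p) + (∫⁻ x, cc (x.1 - x.2) ∂γ₂) ^ (1 / p) :=
          coupling_bound_aux hp hcc htri hmem₁ hmem₂
      _ ≤ (ε₁ ^ (1 / p) + (η : ℝ≥0∞) / 2) + (ε₂ ^ (1 / p) + (η : ℝ≥0∞) / 2) :=
          add_le_add hc₁.le hc₂.le
      _ = ε₁ ^ (1 / p) + ε₂ ^ (1 / p) + ((η : ℝ≥0∞) / 2 + (η : ℝ≥0∞) / 2) := by ring
      _ = ε₁ ^ (1 / p) + ε₂ ^ (1 / p) + η := by rw [ENNReal.add_halves]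
  calc OTCost (fun x => cc (x.1 - x.2)) (mconv P Q) (mconv P' Q')
      = (OTCost (fun x => cc (x.1 - x.2)) (mconv P Q) (mconv P' Q') ^ (1 / p)) ^ p :=
        (rpow_one_div_rpow hppos.ne').symm
    _ ≤ (ε₁ ^ (1 / p) + ε₂ ^ (1 / p)) ^ p := ENNReal.rpow_le_rpow hkey hppos.le
end
end

section
/- Let P₁, P₂, Q ∈ P(ℝⁿ) and let ĉ : ℝⁿ → [0,∞) be Borel, defining the translation-invariant cost c(x₁,x₂) = ĉ(x₁ − x₂), such that ĉ(x₁·x₃ − x₂·x₃) ≤ ĉ(x₁ − x₂) ĉ(x₃) for all x₁, x₂, x₃ ∈ ℝⁿ, where · denotes the entrywise product. Then W_ĉ(P₁ ⊙ Q, P₂ ⊙ Q) ≤ W_ĉ(P₁, P₂) · ∫_{ℝⁿ} ĉ(x) dQ(x). -/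
open MeasureTheory
open scoped ENNReal

noncomputable section

/-- Hadamard product of two measures on `ℝⁿ`: pushforward of the product measure under the
entrywise product. -/
def mhad {n : ℕ} (P Q : Measure (Fin n → ℝ)) : Measure (Fin n → ℝ) :=
  (P.prod Q).map (fun p => p.1 * p.2)

lemma aux_map {n : ℕ} (μ : Measure ((Fin n → ℝ) × (Fin n → ℝ))) (ν : Measure (Fin n → ℝ))
    [SFinite μ] [SFinite ν] (pr : ((Fin n → ℝ) × (Fin n → ℝ)) → (Fin n → ℝ))
    (hpr : Measurable pr) :
    (μ.prod ν).map (fun p => pr p.1 * p.2)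
      = ((μ.map pr).prod ν).map (fun p : (Fin n → ℝ) × (Fin n → ℝ) => p.1 * p.2) := by
  have hmulm : Measurable (fun p : (Fin n → ℝ) × (Fin n → ℝ) => p.1 * p.2) :=
    measurable_fst.mul measurable_snd
  rw [show ν = ν.map id by rw [Measure.map_id], Measure.map_prod_map μ ν hpr measurable_id,
    Measure.map_map hmulm (hpr.prodMap measurable_id), Measure.map_id]
  rfl

/-- The OT discrepancy between Hadamard products with a common measure is bounded by the OT
discrepancy of the factors times the mean cost of the common measure. -/
theorem otCost_hadamard_le
    {n : ℕ} (P₁ P₂ Q : Measure (Fin n → ℝ))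
    [IsProbabilityMeasure P₁] [IsProbabilityMeasure P₂] [IsProbabilityMeasure Q]
    (cc : (Fin n → ℝ) → ℝ≥0∞) (hcc : Measurable cc) (hfin : ∀ u, cc u ≠ ∞)
    (hmul : ∀ x₁ x₂ x₃ : Fin n → ℝ, cc (x₁ * x₃ - x₂ * x₃) ≤ cc (x₁ - x₂) * cc x₃) :
    OTCost (fun x => cc (x.1 - x.2)) (mhad P₁ Q) (mhad P₂ Q)
      ≤ OTCost (fun x => cc (x.1 - x.2)) P₁ P₂ * ∫⁻ x, cc x ∂Q := by
  classical
  set c : ((Fin n → ℝ) × (Fin n → ℝ)) → ℝ≥0∞ := fun x => cc (x.1 - x.2) with hcdef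
  set cstar := OTCost c P₁ P₂ with hcstar
  set I := ∫⁻ x, cc x ∂Q with hIdef
  have hmulm : Measurable (fun p : (Fin n → ℝ) × (Fin n → ℝ) => p.1 * p.2) :=
    measurable_fst.mul measurable_snd
  have hcm : Measurable c := hcc.comp (measurable_fst.sub measurable_snd)
  haveI hPQ1 : IsProbabilityMeasure (mhad P₁ Q) := Measure.isProbabilityMeasure_map hmulm.aemeasurable
  haveI hPQ2 : IsProbabilityMeasure (mhad P₂ Q) := Measure.isProbabilityMeasure_map hmulm.aemeasurable
  refine ENNReal.le_of_forall_pos_le_add fun ε hε _ => ?_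
  have hne : (P₁.prod P₂) ∈ couplings P₁ P₂ :=
    ⟨inferInstance, Measure.fst_prod, Measure.snd_prod⟩
  set δ : ℕ → ℝ≥0∞ := fun k => (ε : ℝ≥0∞) * 2⁻¹ ^ (k + 1) / ((k : ℝ≥0∞) + 1) with hδ
  have hδ0 : ∀ k, δ k ≠ 0 := by
    intro k
    simp only [hδ, ne_eq, ENNReal.div_eq_zero_iff, mul_eq_zero, pow_eq_zero_iff',
      ENNReal.coe_eq_zero, hε.ne', false_or, not_or]
    refine ⟨?_, ?_⟩
    · simp
    · exact ENNReal.add_ne_top.mpr ⟨ENNReal.natCast_ne_top k, ENNReal.one_ne_top⟩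
  have hchoice : ∀ k : ℕ, ∃ γ, γ ∈ couplings P₁ P₂ ∧ ∫⁻ x, c x ∂γ ≤ cstar + δ k := by
    intro k
    by_cases htop : cstar = ∞
    · exact ⟨P₁.prod P₂, hne, by simp [htop]⟩
    · have hlt : OTCost c P₁ P₂ < cstar + δ k := by
        rw [← hcstar]; exact ENNReal.lt_add_right htop (hδ0 k)
      rw [OTCost, iInf_lt_iff] at hlt
      obtain ⟨γ, hγ⟩ := hlt
      rw [iInf_lt_iff] at hγ
      obtain ⟨hmem, hlt'⟩ := hγ
      exact ⟨γ, hmem, hlt'.le⟩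
  choose γ hγmem hγcost using hchoice
  have hγprob : ∀ k, IsProbabilityMeasure (γ k) := fun k => (hγmem k).1
  -- the partition of ℝⁿ according to the size of `cc`
  set A : ℕ → Set (Fin n → ℝ) := fun k => cc ⁻¹' Set.Ico (k : ℝ≥0∞) ((k : ℝ≥0∞) + 1) with hA
  have hAm : ∀ k, MeasurableSet (A k) := fun k => hcc measurableSet_Ico
  have hAdisj : Pairwise (Function.onFun Disjoint A) := by
    intro k j hkj
    simp only [Function.onFun, hA, Set.disjoint_left, Set.mem_preimage, Set.mem_Ico]
    rintro y ⟨h1, h2⟩ ⟨h3, h4⟩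
    apply hkj
    have e1 : (k : ℝ≥0∞) < (j : ℝ≥0∞) + 1 := lt_of_le_of_lt h1 h4
    have e2 : (j : ℝ≥0∞) < (k : ℝ≥0∞) + 1 := lt_of_le_of_lt h3 h2
    have e1' : k < j + 1 := by exact_mod_cast e1
    have e2' : j < k + 1 := by exact_mod_cast e2
    omega
  have hAcover : ⋃ k, A k = Set.univ := by
    ext y
    simp only [Set.mem_iUnion, Set.mem_univ, iff_true, hA, Set.mem_preimage, Set.mem_Ico]
    refine ⟨⌊(cc y).toNNReal⌋₊, ?_, ?_⟩
    · have h0 : (⌊(cc y).toNNReal⌋₊ : NNReal) ≤ (cc y).toNNReal := Nat.floor_le zero_le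
      have h1 := ENNReal.coe_le_coe.mpr h0
      rw [ENNReal.coe_toNNReal (hfin y)] at h1
      exact_mod_cast h1
    · have h0 : (cc y).toNNReal < (⌊(cc y).toNNReal⌋₊ : NNReal) + 1 :=
        Nat.lt_floor_add_one ((cc y).toNNReal)
      have h2 := ENNReal.coe_lt_coe.mpr h0
      rw [ENNReal.coe_toNNReal (hfin y)] at h2
      exact_mod_cast h2
  have hQsum : Measure.sum (fun k => Q.restrict (A k)) = Q := by
    rw [← Measure.restrict_iUnion hAdisj hAm, hAcover, Measure.restrict_univ]
  -- the transport plan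
  set F : ((Fin n → ℝ) × (Fin n → ℝ)) × (Fin n → ℝ) → (Fin n → ℝ) × (Fin n → ℝ) :=
    fun p => (p.1.1 * p.2, p.1.2 * p.2) with hF
  have hFm : Measurable F :=
    (measurable_fst.fst.mul measurable_snd).prodMk (measurable_fst.snd.mul measurable_snd)
  set γ' : Measure ((Fin n → ℝ) × (Fin n → ℝ)) :=
    Measure.sum (fun k => (((γ k).prod (Q.restrict (A k))).map F)) with hγ'
  have hmarg : ∀ (pr : ((Fin n → ℝ) × (Fin n → ℝ)) → (Fin n → ℝ)) (hpr : Measurable pr)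
      (hcomp : pr ∘ F = fun p => pr p.1 * p.2)
      (P : Measure (Fin n → ℝ)), (∀ k, (γ k).map pr = P) → γ'.map pr = mhad P Q := by
    intro pr hpr hcomp P hPk
    rw [hγ', Measure.map_sum hpr.aemeasurable]
    have hterm : ∀ k, (((γ k).prod (Q.restrict (A k))).map F).map pr
        = (P.prod (Q.restrict (A k))).map (fun p : (Fin n → ℝ) × (Fin n → ℝ) => p.1 * p.2) := by
      intro k
      haveI := hγprob k
      rw [Measure.map_map hpr hFm, hcomp, aux_map _ _ pr hpr, hPk k]
    simp_rw [hterm]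
    rw [← Measure.map_sum hmulm.aemeasurable, ← Measure.prod_sum_right, hQsum]
    rfl
  have hfst : γ'.map Prod.fst = mhad P₁ Q :=
    hmarg Prod.fst measurable_fst rfl P₁ fun k => (hγmem k).2.1
  have hsnd : γ'.map Prod.snd = mhad P₂ Q :=
    hmarg Prod.snd measurable_snd rfl P₂ fun k => (hγmem k).2.2
  haveI hγ'prob : IsProbabilityMeasure γ' := by
    constructor
    have h := Measure.map_apply (μ := γ') measurable_fst MeasurableSet.univ
    rw [hfst, Set.preimage_univ] at h
    rw [← h]
    exact measure_univ
  have hγ'mem : γ' ∈ couplings (mhad P₁ Q) (mhad P₂ Q) := ⟨hγ'prob, hfst, hsnd⟩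
  -- the cost estimate
  have hIk : ∀ k, ∫⁻ y in A k, cc y ∂Q ≤ ((k : ℝ≥0∞) + 1) * Q (A k) := by
    intro k
    calc ∫⁻ y in A k, cc y ∂Q ≤ ∫⁻ _ in A k, ((k : ℝ≥0∞) + 1) ∂Q :=
          setLIntegral_mono measurable_const fun y hy => hy.2.le
      _ = ((k : ℝ≥0∞) + 1) * Q (A k) := setLIntegral_const _ _
  have hsumI : ∑' k, ∫⁻ y in A k, cc y ∂Q = I := by
    rw [hIdef]
    conv_rhs => rw [← hQsum, lintegral_sum_measure]
  have hδsum : ∑' k, δ k * (∫⁻ y in A k, cc y ∂Q) ≤ (ε : ℝ≥0∞) := by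
    have hstep : ∀ k, δ k * (∫⁻ y in A k, cc y ∂Q) ≤ (ε : ℝ≥0∞) * 2⁻¹ ^ (k + 1) := by
      intro k
      have h1 : δ k * (∫⁻ y in A k, cc y ∂Q) ≤ δ k * ((k : ℝ≥0∞) + 1) := by
        refine mul_le_mul_right ?_ _
        refine le_trans (hIk k) ?_
        calc ((k : ℝ≥0∞) + 1) * Q (A k) ≤ ((k : ℝ≥0∞) + 1) * 1 :=
              mul_le_mul_right prob_le_one _
          _ = (k : ℝ≥0∞) + 1 := mul_one _
      refine le_trans h1 (le_of_eq ?_)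
      rw [hδ]
      exact ENNReal.div_mul_cancel (by simp) (ENNReal.add_ne_top.mpr
        ⟨ENNReal.natCast_ne_top k, ENNReal.one_ne_top⟩)
    refine le_trans (ENNReal.tsum_le_tsum hstep) (le_of_eq ?_)
    rw [ENNReal.tsum_mul_left]
    have hgeo : ∑' k : ℕ, (2⁻¹ : ℝ≥0∞) ^ (k + 1) = 1 := by
      simp_rw [pow_succ]
      rw [ENNReal.tsum_mul_right, ENNReal.tsum_geometric, ENNReal.one_sub_inv_two, inv_inv]
      exact ENNReal.mul_inv_cancel two_ne_zero ENNReal.ofNat_ne_top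
    rw [hgeo, mul_one]
  have hcost : ∫⁻ x, c x ∂γ' ≤ cstar * I + ε := by
    rw [hγ', lintegral_sum_measure]
    have hterm : ∀ k, ∫⁻ x, c x ∂(((γ k).prod (Q.restrict (A k))).map F)
        ≤ (cstar + δ k) * ∫⁻ y in A k, cc y ∂Q := by
      intro k
      haveI := hγprob k
      rw [lintegral_map hcm hFm]
      calc ∫⁻ p, c (F p) ∂((γ k).prod (Q.restrict (A k)))
          ≤ ∫⁻ p, c p.1 * cc p.2 ∂((γ k).prod (Q.restrict (A k))) :=
            lintegral_mono fun p => hmul p.1.1 p.1.2 p.2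
        _ = (∫⁻ a, c a ∂(γ k)) * ∫⁻ y in A k, cc y ∂Q :=
            lintegral_prod_mul hcm.aemeasurable hcc.aemeasurable
        _ ≤ (cstar + δ k) * ∫⁻ y in A k, cc y ∂Q := mul_le_mul_left (hγcost k) _
    calc ∑' k, ∫⁻ x, c x ∂(((γ k).prod (Q.restrict (A k))).map F)
        ≤ ∑' k, (cstar + δ k) * ∫⁻ y in A k, cc y ∂Q := ENNReal.tsum_le_tsum hterm
      _ = cstar * (∑' k, ∫⁻ y in A k, cc y ∂Q)
          + ∑' k, δ k * (∫⁻ y in A k, cc y ∂Q) := by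
          simp_rw [add_mul]
          rw [ENNReal.tsum_add, ENNReal.tsum_mul_left]
      _ ≤ cstar * I + ε := by
          rw [hsumI]
          exact add_le_add_right hδsum _
  refine le_trans ?_ hcost
  exact iInf₂_le γ' hγ'mem
end
end

section
/- Let A ∈ ℝ^{m×n} have full column rank (so that AᵀA is invertible), and set A⁺ := (AᵀA)⁻¹Aᵀ, which is a left inverse of A. Consider the least-squares setting y = A x₀ + z, where x₀ ∈ ℝⁿ and the noise z is distributed according to some P ∈ P(ℝᵐ), and the ordinary least squares estimator x̂ := A⁺ y, so that x̂ − x₀ is distributed according to the pushforward (A⁺)_# P. Let P̂ ∈ P(ℝᵐ) and ε ≥ 0. If P ∈ B_ε^{ĉ}(P̂) with ĉ(u) = ‖u‖₂² the squared Euclidean norm cost on ℝᵐ, then the distribution Q := (A⁺)_# P of the estimation error x̂ − x₀ satisfies Q ∈ B_ε^{ĉ_A}((A⁺)_# P̂), where ĉ_A : ℝⁿ → [0,∞) is the translation-invariant cost ĉ_A(u) = ‖Au‖₂². -/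
open MeasureTheory Matrix
open scoped ENNReal

noncomputable section

/-- Squared Euclidean norm, as a transportation cost kernel. -/
def sqEuclid {k : ℕ} (u : Fin k → ℝ) : ℝ≥0∞ :=
  ENNReal.ofReal (∑ i, (u i) ^ 2)

lemma mulVec_measurable {a b : ℕ} (M : Matrix (Fin a) (Fin b) ℝ) :
    Measurable M.mulVec := by
  have : Continuous M.mulVec := (M.mulVecLin.continuous_of_finiteDimensional)
  exact this.measurable

lemma proj_contract {m n : ℕ} (A : Matrix (Fin m) (Fin n) ℝ) (hA : IsUnit (Aᵀ * A))
    (v : Fin m → ℝ) :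
    ∑ i, ((A * ((Aᵀ * A)⁻¹ * Aᵀ)) *ᵥ v) i ^ 2 ≤ ∑ i, v i ^ 2 := by
  set M := A * ((Aᵀ * A)⁻¹ * Aᵀ) with hM
  have hdet : IsUnit (Aᵀ * A).det := (Matrix.isUnit_iff_isUnit_det _).mp hA
  have hsym : Mᵀ = M := by
    rw [hM]
    simp [Matrix.transpose_mul, Matrix.transpose_nonsing_inv, Matrix.mul_assoc]
  have hidem : M * M = M := by
    rw [hM]
    have : (Aᵀ * A)⁻¹ * Aᵀ * (A * ((Aᵀ * A)⁻¹ * Aᵀ)) = (Aᵀ * A)⁻¹ * Aᵀ := by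
      calc (Aᵀ * A)⁻¹ * Aᵀ * (A * ((Aᵀ * A)⁻¹ * Aᵀ))
          = (Aᵀ * A)⁻¹ * (Aᵀ * A) * ((Aᵀ * A)⁻¹ * Aᵀ) := by
            simp only [Matrix.mul_assoc]
        _ = (Aᵀ * A)⁻¹ * Aᵀ := by rw [Matrix.nonsing_inv_mul _ hdet, Matrix.one_mul]
    rw [Matrix.mul_assoc, this]
  set w := M *ᵥ v with hw
  have key : w ⬝ᵥ w = w ⬝ᵥ v := by
    conv_lhs => rw [hw]
    rw [show w ⬝ᵥ M *ᵥ v = (w ᵥ* M) ⬝ᵥ v from Matrix.dotProduct_mulVec w M v]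
    congr 1
    rw [← hsym, Matrix.vecMul_transpose, hw, Matrix.mulVec_mulVec, hidem]
  have cs : (∑ i, w i * v i) ^ 2 ≤ (∑ i, w i ^ 2) * ∑ i, v i ^ 2 :=
    Finset.sum_mul_sq_le_sq_mul_sq _ _ _
  have hww : w ⬝ᵥ w = ∑ i, w i ^ 2 := by simp [dotProduct, sq]
  have hwv : w ⬝ᵥ v = ∑ i, w i * v i := rfl
  have key2 : (∑ i, w i ^ 2) ^ 2 ≤ (∑ i, w i ^ 2) * ∑ i, v i ^ 2 := by
    have h := cs
    rw [← hwv, ← key, hww] at h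
    exact h
  rcases eq_or_lt_of_le (Finset.sum_nonneg fun i _ => sq_nonneg (w i)) with h0 | h0
  · rw [← h0]; exact Finset.sum_nonneg fun i _ => sq_nonneg (v i)
  · have := key2
    rw [sq] at this
    exact le_of_mul_le_mul_left this h0

/-- Distributional uncertainty in the ordinary least squares estimator: if the noise
distribution `P` lies in the OT ambiguity set of radius `ε` (squared Euclidean cost) around
`P̂`, then the distribution `Q = (A⁺)_# P` of the estimation error `x̂ - x₀` (where
`y = A x₀ + z`, `z ∼ P`, and `x̂ = A⁺ y`, so that `x̂ - x₀ = A⁺ z`) lies in the OT ambiguity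
set of radius `ε` with cost `ĉ_A(u) = ‖Au‖₂²` around `(A⁺)_# P̂`. -/
theorem ols_ambiguity
    {m n : ℕ}
    (A : Matrix (Fin m) (Fin n) ℝ) (hA : IsUnit (Aᵀ * A))
    (Ap : Matrix (Fin n) (Fin m) ℝ) (hAp : Ap = (Aᵀ * A)⁻¹ * Aᵀ)
    (P Phat : Measure (Fin m → ℝ))
    [IsProbabilityMeasure P] [IsProbabilityMeasure Phat]
    (ε : ℝ≥0∞)
    (x₀ : Fin n → ℝ) (z : (Fin m → ℝ)) (y : Fin m → ℝ) (hy : y = A.mulVec x₀ + z)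
    (hP : P ∈ ambiguitySet (fun x => sqEuclid (x.1 - x.2)) ε Phat) :
    P.map Ap.mulVec
      ∈ ambiguitySet (fun x => sqEuclid (A.mulVec x.1 - A.mulVec x.2)) ε
          (Phat.map Ap.mulVec) := by
  obtain ⟨hPprob, hPcost⟩ := hP
  have hmeas : Measurable Ap.mulVec := mulVec_measurable Ap
  have hmeasA : Measurable A.mulVec := mulVec_measurable A
  constructor
  · exact Measure.isProbabilityMeasure_map hmeas.aemeasurable
  · refine le_trans ?_ hPcost
    -- OTCost c' (Phat.map) (P.map) ≤ OTCost c Phat P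
    refine le_iInf₂ fun γ hγ => ?_
    obtain ⟨hγprob, hγ1, hγ2⟩ := hγ
    set f : (Fin m → ℝ) × (Fin m → ℝ) → (Fin n → ℝ) × (Fin n → ℝ) :=
      fun p => (Ap.mulVec p.1, Ap.mulVec p.2) with hf
    have hfmeas : Measurable f := (hmeas.comp measurable_fst).prodMk (hmeas.comp measurable_snd)
    have hmem : γ.map f ∈ couplings (Phat.map Ap.mulVec) (P.map Ap.mulVec) := by
      refine ⟨Measure.isProbabilityMeasure_map hfmeas.aemeasurable, ?_, ?_⟩
      · rw [Measure.map_map measurable_fst hfmeas, show Prod.fst ∘ f = Ap.mulVec ∘ Prod.fst from rfl,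
          ← Measure.map_map hmeas measurable_fst, hγ1]
      · rw [Measure.map_map measurable_snd hfmeas, show Prod.snd ∘ f = Ap.mulVec ∘ Prod.snd from rfl,
          ← Measure.map_map hmeas measurable_snd, hγ2]
    have hcmeas : Measurable fun x : (Fin n → ℝ) × (Fin n → ℝ) =>
        sqEuclid (A.mulVec x.1 - A.mulVec x.2) := by
      apply ENNReal.measurable_ofReal.comp
      apply Finset.measurable_sum
      intro i _
      exact (((hmeasA.comp measurable_fst).sub (hmeasA.comp measurable_snd)).eval.pow_const 2)
    calc (⨅ γ' ∈ couplings (Phat.map Ap.mulVec) (P.map Ap.mulVec),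
            ∫⁻ x, sqEuclid (A.mulVec x.1 - A.mulVec x.2) ∂γ')
        ≤ ∫⁻ x, sqEuclid (A.mulVec x.1 - A.mulVec x.2) ∂(γ.map f) := iInf₂_le _ hmem
      _ = ∫⁻ p, sqEuclid (A.mulVec (Ap.mulVec p.1) - A.mulVec (Ap.mulVec p.2)) ∂γ := by
          rw [MeasureTheory.lintegral_map hcmeas hfmeas]
      _ ≤ ∫⁻ p, sqEuclid (p.1 - p.2) ∂γ := by
          apply lintegral_mono
          intro p
          apply ENNReal.ofReal_le_ofReal
          have : A.mulVec (Ap.mulVec p.1) - A.mulVec (Ap.mulVec p.2)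
              = (A * ((Aᵀ * A)⁻¹ * Aᵀ)) *ᵥ (p.1 - p.2) := by
            rw [Matrix.mulVec_sub, Matrix.mulVec_mulVec, Matrix.mulVec_mulVec, hAp]
          rw [this]
          exact proj_contract A hA (p.1 - p.2)
end
end
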